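/- arXiv:1410.6549 — 5 statements merged into one kernel-verified Lean document; each statement's English description precedes it below -/
import Mathlib

section
/- There exists a semistandard Young tableau of shape ν and content μ if and only if ν dominates μ (the Gale–Ryser theorem for semistandard fillings). -/
/-- `f` is a partition of `d`: nonincreasing parts, eventually zero, summing to `d`. -/
def IsPartitionOf (d : ℕ) (f : ℕ → ℕ) : Prop :=
  (∀ i j, i ≤ j → f j ≤ f i) ∧
  ∃ N, (∀ i, N ≤ i → f i = 0) ∧ ∑ i ∈ Finset.range N, f i = d

/-- `f` dominates `g`. -/
def Dominates (f g : ℕ → ℕ) : Prop :=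
  ∀ k, ∑ i ∈ Finset.range k, g i ≤ ∑ i ∈ Finset.range k, f i

/-- `T` is a filling of shape `ν` with content `μ`: each box `(r,c)` (0-indexed,
`c < ν r`) gets a positive integer, and the value `i+1` is used exactly `μ i` times. -/
def IsFilling (ν μ : ℕ → ℕ) (T : ℕ → ℕ → ℕ) : Prop :=
  (∀ r c, c < ν r → 1 ≤ T r c) ∧
  ∀ i, {p : ℕ × ℕ | p.2 < ν p.1 ∧ T p.1 p.2 = i + 1}.ncard = μ i

/-- A filling is semistandard: entries weakly increase along rows and strictly
increase down columns. -/
def IsSemistandard (ν : ℕ → ℕ) (T : ℕ → ℕ → ℕ) : Prop :=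
  (∀ r c c', c ≤ c' → c' < ν r → T r c ≤ T r c') ∧
  (∀ r r' c, r < r' → c < ν r' → T r c < T r' c)

def shapeF (ν : ℕ → ℕ) (L : ℕ) : Finset (ℕ × ℕ) :=
  (Finset.range L).biUnion (fun r => {r} ×ˢ Finset.range (ν r))

lemma mem_shapeF {ν : ℕ → ℕ} {L : ℕ} {p : ℕ × ℕ} :
    p ∈ shapeF ν L ↔ p.1 < L ∧ p.2 < ν p.1 := by
  simp only [shapeF, Finset.mem_biUnion, Finset.mem_range, Finset.mem_product,
    Finset.mem_singleton]
  constructor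
  · rintro ⟨r, hr, h1, h2⟩; subst h1; exact ⟨hr, h2⟩
  · rintro ⟨h1, h2⟩; exact ⟨p.1, h1, rfl, h2⟩

lemma card_shapeF (ν : ℕ → ℕ) (L : ℕ) :
    (shapeF ν L).card = ∑ r ∈ Finset.range L, ν r := by
  rw [shapeF, Finset.card_biUnion]
  · simp
  · intro i _ j _ hij
    simp only [Finset.disjoint_left]
    rintro ⟨a, b⟩ h1 h2
    simp_all

lemma ncard_eq (ν : ℕ → ℕ) (L : ℕ) (hL : ∀ i, L ≤ i → ν i = 0)
    (P : ℕ × ℕ → Prop) [DecidablePred P] :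
    {p : ℕ × ℕ | p.2 < ν p.1 ∧ P p}.ncard = ((shapeF ν L).filter P).card := by
  rw [← Set.ncard_coe_finset]
  congr 1
  ext p
  simp only [Set.mem_setOf_eq, Finset.coe_filter, mem_shapeF]
  constructor
  · rintro ⟨h1, h2⟩
    refine ⟨⟨?_, h1⟩, h2⟩
    by_contra h
    have := hL p.1 (by omega)
    omega
  · rintro ⟨⟨_, h1⟩, h2⟩; exact ⟨h1, h2⟩

/-- entries of a filling with content vanishing from `n` on are at most `n` -/
lemma entry_le {ν μ : ℕ → ℕ} {T : ℕ → ℕ → ℕ} {n L : ℕ}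
    (hfill : IsFilling ν μ T) (hL : ∀ i, L ≤ i → ν i = 0)
    (hμ : ∀ i, n ≤ i → μ i = 0) :
    ∀ r c, c < ν r → T r c ≤ n := by
  classical
  intro r c hc
  by_contra h
  push_neg at h
  set i := T r c - 1 with hi
  have h1 : 1 ≤ T r c := hfill.1 r c hc
  have hTi : T r c = i + 1 := by omega
  have hni : n ≤ i := by omega
  have hcard := hfill.2 i
  rw [ncard_eq ν L hL (fun p => T p.1 p.2 = i + 1), hμ i hni,
    Finset.card_eq_zero] at hcard
  have : (r, c) ∈ (shapeF ν L).filter (fun p => T p.1 p.2 = i + 1) := by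
    simp only [Finset.mem_filter, mem_shapeF]
    refine ⟨⟨?_, hc⟩, hTi⟩
    by_contra hr
    have := hL r (by omega)
    omega
  rw [hcard] at this
  exact absurd this (Finset.notMem_empty _)

lemma row_lt {ν : ℕ → ℕ} {T : ℕ → ℕ → ℕ}
    (hmono : ∀ i j, i ≤ j → ν j ≤ ν i)
    (hpos : ∀ r c, c < ν r → 1 ≤ T r c)
    (hcol : ∀ r r' c, r < r' → c < ν r' → T r c < T r' c) :
    ∀ r c, c < ν r → r < T r c := by
  intro r
  induction r with
  | zero => intro c hc; exact hpos 0 c hc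
  | succ k ih =>
    intro c hc
    have hck : c < ν k := lt_of_lt_of_le hc (hmono k (k+1) (by omega))
    have := hcol k (k+1) c (by omega) hc
    have := ih c hck
    omega

lemma forward {ν μ : ℕ → ℕ} {T : ℕ → ℕ → ℕ}
    (hν : ∀ i j, i ≤ j → ν j ≤ ν i) (L : ℕ) (hL : ∀ i, L ≤ i → ν i = 0)
    (hfill : IsFilling ν μ T) (hssyt : IsSemistandard ν T) :
    Dominates ν μ := by
  classical
  intro k
  have key : ∀ i, μ i = ((shapeF ν L).filter (fun p => T p.1 p.2 = i + 1)).card := by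
    intro i
    rw [← hfill.2 i, ncard_eq ν L hL]
  calc ∑ i ∈ Finset.range k, μ i
      = ∑ i ∈ Finset.range k, ((shapeF ν L).filter (fun p => T p.1 p.2 = i + 1)).card := by
        exact Finset.sum_congr rfl (fun i _ => key i)
    _ = ((Finset.range k).biUnion
          (fun i => (shapeF ν L).filter (fun p => T p.1 p.2 = i + 1))).card := by
        rw [Finset.card_biUnion]
        intro i _ j _ hij
        simp only [Finset.disjoint_left, Finset.mem_filter]
        rintro p ⟨_, h1⟩ ⟨_, h2⟩
        omega
    _ ≤ (shapeF ν k).card := by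
        apply Finset.card_le_card
        intro p hp
        simp only [Finset.mem_biUnion, Finset.mem_filter, Finset.mem_range, mem_shapeF] at hp ⊢
        obtain ⟨i, hik, ⟨_, hc⟩, hT⟩ := hp
        have := row_lt hν hfill.1 hssyt.2 p.1 p.2 hc
        exact ⟨by omega, hc⟩
    _ = ∑ i ∈ Finset.range k, ν i := card_shapeF ν k

lemma backward : ∀ (n d : ℕ) (ν μ : ℕ → ℕ), IsPartitionOf d ν → IsPartitionOf d μ →
    (∀ i, n ≤ i → μ i = 0) → Dominates ν μ →
    ∃ T, IsFilling ν μ T ∧ IsSemistandard ν T := by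
  classical
  intro n
  induction n with
  | zero =>
    intro d ν μ hν hμ hz hdom
    -- all of μ is zero, hence d = 0 and ν is zero
    obtain ⟨hνmono, N, hN, hNsum⟩ := hν
    obtain ⟨hμmono, M, hM, hMsum⟩ := hμ
    have hd : d = 0 := by
      rw [← hMsum]
      apply Finset.sum_eq_zero
      intro i _
      exact hz i (by omega)
    subst hd
    have hν0 : ∀ r, ν r = 0 := by
      intro r
      rcases le_or_gt N r with h | h
      · exact hN r h
      · have : ν r ≤ ∑ i ∈ Finset.range N, ν i :=
          Finset.single_le_sum (fun i _ => Nat.zero_le _) (Finset.mem_range.mpr h)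
        omega
    refine ⟨fun _ _ => 1, ⟨?_, ?_⟩, ?_, ?_⟩
    · intro r c hc
      exact absurd hc (by simp [hν0])
    · intro i
      have hempty : {p : ℕ × ℕ | p.2 < ν p.1 ∧ (fun _ _ => 1 : ℕ → ℕ → ℕ) p.1 p.2 = i + 1}
          = ∅ := by
        ext p; simp [hν0]
      rw [hempty, Set.ncard_empty, hz i (by omega)]
    · intro r c c' _ hc'
      exact absurd hc' (by simp [hν0])
    · intro r r' c _ hc
      exact absurd hc (by simp [hν0])
  | succ n ih =>
    intro d ν μ hν hμ hz hdom
    by_cases hn : μ n = 0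
    · refine ih d ν μ hν hμ (fun i hi => ?_) hdom
      rcases eq_or_lt_of_le hi with h | h
      · rw [← h]; exact hn
      · exact hz i (by omega)
    -- main case: q = μ n > 0
    set q := μ n with hq
    obtain ⟨hνmono, N, hN, hNsum⟩ := hν
    obtain ⟨hμmono, M, hM, hMsum⟩ := hμ
    have hnM : n < M := by by_contra h; exact hn (hM n (by omega))
    have hqd : q ≤ d := by
      rw [← hMsum]
      exact Finset.single_le_sum (fun i _ => Nat.zero_le _) (Finset.mem_range.mpr hnM)
    have hqν0 : q ≤ ν 0 := by
      have h1 : μ 0 ≤ ν 0 := by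
        have := hdom 1
        simpa using this
      exact le_trans (hμmono 0 n (Nat.zero_le _)) h1
    -- the new shape
    set ν' : ℕ → ℕ := fun i => ν i - (min q (ν i) - min q (ν (i+1))) with hν'
    set μ' : ℕ → ℕ := fun i => if i = n then 0 else μ i with hμ'
    have hν'le : ∀ i, ν' i ≤ ν i := by intro i; simp only [hν']; omega
    have hν'ge : ∀ i, ν (i+1) ≤ ν' i := by
      intro i
      have := hνmono i (i+1) (by omega)
      simp only [hν']
      omega
    have hν'mono : ∀ i j, i ≤ j → ν' j ≤ ν' i := by
      intro i j hij
      rcases eq_or_lt_of_le hij with h | h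
      · rw [h]
      · calc ν' j ≤ ν j := hν'le j
          _ ≤ ν (i+1) := hνmono (i+1) j (by omega)
          _ ≤ ν' i := hν'ge i
    have hsum : ∀ K, (∑ i ∈ Finset.range K, ν' i) + q =
        (∑ i ∈ Finset.range K, ν i) + min q (ν K) := by
      intro K
      induction K with
      | zero => simpa using (min_eq_left hqν0).symm
      | succ k ihk =>
        rw [Finset.sum_range_succ, Finset.sum_range_succ]
        have h1 : ν' k + min q (ν k) = ν k + min q (ν (k+1)) := by
          have := hνmono k (k+1) (by omega)
          simp only [hν']
          omega
        omega
    have hν'part : IsPartitionOf (d - q) ν' := by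
      refine ⟨hν'mono, N, ?_, ?_⟩
      · intro i hi
        have h1 := hN i hi
        have := hν'le i
        omega
      · have := hsum N
        rw [hNsum, hN N (le_refl N)] at this
        simp at this
        omega
    have hμ'sum : ∀ K, n < K →
        (∑ i ∈ Finset.range K, μ' i) + q = ∑ i ∈ Finset.range K, μ i := by
      intro K hK
      have hmem : n ∈ Finset.range K := Finset.mem_range.mpr hK
      rw [← Finset.sum_erase_add (Finset.range K) μ hmem]
      congr 1
      rw [← Finset.sum_erase_add (Finset.range K) μ' hmem]
      have : μ' n = 0 := by simp [hμ']
      rw [this, add_zero]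
      exact Finset.sum_congr rfl (fun i hi => by
        have : i ≠ n := (Finset.mem_erase.mp hi).1
        simp [hμ', this])
    have hμ'part : IsPartitionOf (d - q) μ' := by
      refine ⟨?_, max M (n+1), ?_, ?_⟩
      · intro i j hij
        by_cases hjn : j = n
        · simp [hμ', hjn]
        · by_cases hin : i = n
          · have : μ' j = 0 := by
              have : μ j = 0 := hz j (by omega)
              simp [hμ', hjn, this]
            omega
          · simp only [hμ', if_neg hjn, if_neg hin]
            exact hμmono i j hij
      · intro i hi
        have : μ i = 0 := hM i (by omega)
        simp [hμ', this]
      · have h1 : ∑ i ∈ Finset.range (max M (n+1)), μ i = d := by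
          rw [← hMsum]
          symm
          apply Finset.sum_subset
          · apply Finset.range_subset_range.mpr; omega
          · intro i _ hi
            exact hM i (by simp at hi; omega)
        have := hμ'sum (max M (n+1)) (by omega)
        omega
    have hdom' : Dominates ν' μ' := by
      intro K
      have hs := hsum K
      rcases le_or_gt K n with hK | hK
      · have hμeq : ∑ i ∈ Finset.range K, μ' i = ∑ i ∈ Finset.range K, μ i := by
          apply Finset.sum_congr rfl
          intro i hi
          have : i ≠ n := by simp at hi; omega
          simp [hμ', this]
        have h1 := hdom K
        have h2 := hdom (K+1)
        rw [Finset.sum_range_succ, Finset.sum_range_succ] at h2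
        have h3 : q ≤ μ K := hμmono K n hK
        omega
      · have h1 := hμ'sum K hK
        have h2 := hdom K
        omega
    obtain ⟨T', hT'fill, hT'ssyt⟩ := ih (d - q) ν' μ' hν'part hμ'part
      (fun i hi => by
        rcases eq_or_lt_of_le hi with h | h
        · simp [hμ', ← h]
        · have : μ i = 0 := hz i (by omega)
          simp [hμ', this]) hdom'
    have hν'N : ∀ i, N ≤ i → ν' i = 0 := by
      intro i hi
      have h1 := hN i hi
      have h2 := hν'le i
      omega
    have hT'le : ∀ r c, c < ν' r → T' r c ≤ n :=
      entry_le hT'fill hν'N (fun i hi => by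
        rcases eq_or_lt_of_le hi with h | h
        · simp [hμ', ← h]
        · have : μ i = 0 := hz i (by omega)
          simp [hμ', this])
    -- the new tableau
    set T : ℕ → ℕ → ℕ := fun r c => if c < ν' r then T' r c else n + 1 with hT
    have hTdef : ∀ r c, T r c = if c < ν' r then T' r c else n + 1 := fun _ _ => rfl
    refine ⟨T, ⟨?_, ?_⟩, ?_, ?_⟩
    · intro r c hc
      rw [hTdef]
      by_cases h : c < ν' r
      · rw [if_pos h]; exact hT'fill.1 r c h
      · rw [if_neg h]; omega
    · intro i
      by_cases hin : i = n
      · -- count of value n+1: the strip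
        rw [hin, ncard_eq ν N hN (fun p => T p.1 p.2 = n + 1)]
        have hset : (shapeF ν N).filter (fun p => T p.1 p.2 = n + 1)
            = (Finset.range N).biUnion (fun r => {r} ×ˢ Finset.Ico (ν' r) (ν r)) := by
          ext p
          simp only [Finset.mem_filter, mem_shapeF, Finset.mem_biUnion, Finset.mem_range,
            Finset.mem_product, Finset.mem_singleton, Finset.mem_Ico]
          constructor
          · rintro ⟨⟨hp1, hp2⟩, hTv⟩
            refine ⟨p.1, hp1, rfl, ?_, hp2⟩
            by_contra h
            push_neg at h
            rw [hTdef, if_pos h] at hTv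
            have := hT'le p.1 p.2 h
            omega
          · rintro ⟨r, hr, hfst, h1, h2⟩
            refine ⟨⟨?_, ?_⟩, ?_⟩
            · omega
            · rw [hfst]; omega
            · rw [hTdef, hfst, if_neg (by omega)]
        rw [hset, Finset.card_biUnion]
        · have hcards : ∑ r ∈ Finset.range N, ({r} ×ˢ Finset.Ico (ν' r) (ν r)).card
              = ∑ r ∈ Finset.range N, (ν r - ν' r) := by
            apply Finset.sum_congr rfl
            intro r _
            rw [Finset.card_product, Finset.card_singleton, Nat.card_Ico, one_mul]
          rw [hcards]
          have h1 : (∑ r ∈ Finset.range N, (ν r - ν' r)) + ∑ r ∈ Finset.range N, ν' r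
              = ∑ r ∈ Finset.range N, ν r := by
            rw [← Finset.sum_add_distrib]
            apply Finset.sum_congr rfl
            intro r _
            have := hν'le r
            omega
          have h2 := hsum N
          rw [hNsum, hN N (le_refl N)] at h2
          simp only [Nat.min_zero, add_zero] at h2
          omega
        · intro i _ j _ hij
          simp only [Finset.disjoint_left]
          rintro ⟨a, b⟩ h1 h2
          simp only [Finset.mem_product, Finset.mem_singleton] at h1 h2
          exact hij (h1.1.symm.trans h2.1)
      · -- count of other values: same as in T'
        have hseteq : {p : ℕ × ℕ | p.2 < ν p.1 ∧ T p.1 p.2 = i + 1}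
            = {p : ℕ × ℕ | p.2 < ν' p.1 ∧ T' p.1 p.2 = i + 1} := by
          ext p
          simp only [Set.mem_setOf_eq, hTdef]
          constructor
          · rintro ⟨h1, h2⟩
            by_cases h : p.2 < ν' p.1
            · rw [if_pos h] at h2; exact ⟨h, h2⟩
            · rw [if_neg h] at h2; omega
          · rintro ⟨h1, h2⟩
            exact ⟨lt_of_lt_of_le h1 (hν'le p.1), by rw [if_pos h1]; exact h2⟩
        rw [hseteq, hT'fill.2 i]
        simp [hμ', hin]
    · -- rows weakly increase
      intro r c c' hcc hc'
      rw [hTdef, hTdef]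
      by_cases h2 : c' < ν' r
      · have h1 : c < ν' r := by omega
        rw [if_pos h1, if_pos h2]
        exact hT'ssyt.1 r c c' hcc h2
      · rw [if_neg h2]
        by_cases h1 : c < ν' r
        · rw [if_pos h1]
          have := hT'le r c h1
          omega
        · rw [if_neg h1]
    · -- columns strictly increase
      intro r r' c hrr hc
      rw [hTdef, hTdef]
      by_cases h2 : c < ν' r'
      · have h1 : c < ν' r := lt_of_lt_of_le h2 (hν'mono r r' (by omega))
        rw [if_pos h1, if_pos h2]
        exact hT'ssyt.2 r r' c hrr h2
      · rw [if_neg h2]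
        have h1 : c < ν' r := by
          have hr1 : r ≤ r' - 1 := by omega
          have hs1 : ν r' ≤ ν' (r' - 1) := by
            have heq : (r' - 1) + 1 = r' := by omega
            rw [← heq]
            exact hν'ge (r' - 1)
          have hs2 : ν' (r' - 1) ≤ ν' r := hν'mono r (r' - 1) hr1
          omega
        rw [if_pos h1]
        have := hT'le r c h1
        omega

/-- Gale–Ryser: there is a semistandard Young tableau of shape `ν` and content `μ`
iff `ν` dominates `μ`. -/
theorem ssyt_exists_iff_dominates (d : ℕ) (ν μ : ℕ → ℕ)
    (hν : IsPartitionOf d ν) (hμ : IsPartitionOf d μ) :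
    (∃ T, IsFilling ν μ T ∧ IsSemistandard ν T) ↔ Dominates ν μ := by
  constructor
  · rintro ⟨T, hfill, hssyt⟩
    obtain ⟨hνmono, N, hN, -⟩ := hν
    exact forward hνmono N hN hfill hssyt
  · intro hdom
    obtain ⟨hμmono, M, hM, hMs⟩ := hμ
    exact backward M d ν μ hν ⟨hμmono, M, hM, hMs⟩ hM hdom
end

section
/- There exists a filling of shape ν with content μ such that no column contains two equal entries if and only if there exists a semistandard filling of shape ν with content μ. -/
open Finset

noncomputable section
namespace ColDist
open scoped Classical

/-- the `r`-th smallest element of a finset of naturals. -/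
def nth (s : Finset ℕ) (r : ℕ) : ℕ := (s.sort (· ≤ ·)).getD r 0

lemma nth_eq_get (s : Finset ℕ) {r : ℕ} (h : r < s.card) :
    nth s r = (s.sort (· ≤ ·))[r]'(by rwa [Finset.length_sort]) := by
  rw [nth, List.getD_eq_getElem]

lemma nth_mem {s : Finset ℕ} {r : ℕ} (h : r < s.card) : nth s r ∈ s := by
  rw [nth_eq_get s h]
  exact (Finset.mem_sort _).1 (List.getElem_mem _)

lemma nth_lt_nth {s : Finset ℕ} {r r' : ℕ} (h : r < r') (h' : r' < s.card) :
    nth s r < nth s r' := by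
  rw [nth_eq_get s (h.trans h'), nth_eq_get s h']
  have := (Finset.sortedLT_sort s).pairwise
  rw [List.pairwise_iff_get] at this
  exact this ⟨r, by rw [Finset.length_sort]; exact h.trans h'⟩ ⟨r', by rwa [Finset.length_sort]⟩ h

lemma exists_nth {s : Finset ℕ} {x : ℕ} (h : x ∈ s) : ∃ r < s.card, nth s r = x := by
  have hx : x ∈ s.sort (· ≤ ·) := (Finset.mem_sort _).2 h
  obtain ⟨r, hr, hget⟩ := List.getElem_of_mem hx
  exact ⟨r, by rwa [Finset.length_sort] at hr, by rw [nth_eq_get s (by rwa [Finset.length_sort] at hr)]; exact hget⟩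

lemma val_eq_map (s : Finset ℕ) :
    s.val = (Multiset.range s.card).map (nth s) := by
  have h1 : s.val = ↑(s.sort (· ≤ ·)) := (Finset.sort_eq s _).symm
  rw [h1]
  have : s.sort (· ≤ ·) = (List.range s.card).map (nth s) := by
    apply List.ext_getElem
    · simp [Finset.length_sort]
    · intro n h1' h2'
      simp only [List.getElem_map, List.getElem_range]
      rw [nth_eq_get s (by simpa [Finset.length_sort] using h1')]
  rw [this]
  rfl

lemma sum_eq (s : Finset ℕ) : s.sum id = ∑ r ∈ Finset.range s.card, nth s r := by
  rw [Finset.sum, val_eq_map s, Finset.sum, Finset.range_val]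
  simp

/-! ### the min/max column swap -/

section Swap

variable (A B : Finset ℕ)

/-- new left column -/
def swapL : Finset ℕ :=
  (Finset.range A.card).image fun r => if r < B.card then min (nth A r) (nth B r) else nth A r

/-- new right column -/
def swapR : Finset ℕ :=
  (Finset.range B.card).image fun r => max (nth A r) (nth B r)

lemma swapL_strictMonoOn (hqp : B.card ≤ A.card) :
    ∀ r < A.card, ∀ r' < A.card, r < r' →
      (if r < B.card then min (nth A r) (nth B r) else nth A r) <
      (if r' < B.card then min (nth A r') (nth B r') else nth A r') := by
  intro r hr r' hr' hrr'
  by_cases h1 : r < B.card <;> by_cases h2 : r' < B.card <;> simp only [h1, h2, if_true, if_false, if_pos, if_neg]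
  · exact lt_min (min_le_left _ _ |>.trans_lt (nth_lt_nth hrr' hr'))
      (min_le_right _ _ |>.trans_lt (nth_lt_nth hrr' h2))
  · exact (min_le_left _ _).trans_lt (nth_lt_nth hrr' hr')
  · exact absurd (hrr'.trans h2) h1
  · exact nth_lt_nth hrr' hr'

lemma swapL_card (hqp : B.card ≤ A.card) : (swapL A B).card = A.card := by
  rw [swapL, Finset.card_image_of_injOn, Finset.card_range]
  intro r hr r' hr' h
  simp only [Finset.coe_range, Set.mem_Iio] at hr hr'
  rcases lt_trichotomy r r' with hlt | he | hgt
  · exact absurd h (swapL_strictMonoOn A B hqp r hr r' hr' hlt).ne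
  · exact he
  · exact absurd h.symm (swapL_strictMonoOn A B hqp r' hr' r hr hgt).ne

lemma swapR_card (hqp : B.card ≤ A.card) : (swapR A B).card = B.card := by
  rw [swapR, Finset.card_image_of_injOn, Finset.card_range]
  intro r hr r' hr' h
  simp only [Finset.coe_range, Set.mem_Iio] at hr hr'
  rcases lt_trichotomy r r' with hlt | he | hgt
  · refine absurd h (ne_of_lt ?_)
    exact max_lt (lt_max_of_lt_left (nth_lt_nth hlt (hr'.trans_le hqp)))
      (lt_max_of_lt_right (nth_lt_nth hlt hr'))
  · exact he
  · refine absurd h.symm (ne_of_lt ?_)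
    exact max_lt (lt_max_of_lt_left (nth_lt_nth hgt (hr.trans_le hqp)))
      (lt_max_of_lt_right (nth_lt_nth hgt hr))

lemma minmax_cons (a b : ℕ) (M : Multiset ℕ) :
    max a b ::ₘ min a b ::ₘ M = b ::ₘ a ::ₘ M := by
  rcases le_total a b with h | h
  · rw [min_eq_left h, max_eq_right h]
  · rw [min_eq_right h, max_eq_left h, Multiset.cons_swap]

lemma map_minmax (a b : ℕ → ℕ) (m : Multiset ℕ) :
    m.map (fun r => min (a r) (b r)) + m.map (fun r => max (a r) (b r)) = m.map a + m.map b := by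
  induction m using Multiset.induction with
  | empty => simp
  | cons x m ih =>
    simp only [Multiset.map_cons, Multiset.cons_add, Multiset.add_cons]
    rw [minmax_cons, ih, Multiset.cons_swap]

lemma swap_val (hqp : B.card ≤ A.card) : (swapL A B).val + (swapR A B).val = A.val + B.val := by
  have hL : (swapL A B).val = (Multiset.range A.card).map
      (fun r => if r < B.card then min (nth A r) (nth B r) else nth A r) := by
    rw [swapL, Finset.image_val_of_injOn, Finset.range_val]
    intro r hr r' hr' h
    simp only [Finset.coe_range, Set.mem_Iio] at hr hr'
    rcases lt_trichotomy r r' with hlt | he | hgt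
    · exact absurd h (swapL_strictMonoOn A B hqp r hr r' hr' hlt).ne
    · exact he
    · exact absurd h.symm (swapL_strictMonoOn A B hqp r' hr' r hr hgt).ne
  have hR : (swapR A B).val = (Multiset.range B.card).map
      (fun r => max (nth A r) (nth B r)) := by
    rw [swapR, Finset.image_val_of_injOn, Finset.range_val]
    intro r hr r' hr' h
    simp only [Finset.coe_range, Set.mem_Iio] at hr hr'
    rcases lt_trichotomy r r' with hlt | he | hgt
    · exact absurd h (ne_of_lt (max_lt (lt_max_of_lt_left (nth_lt_nth hlt (hr'.trans_le hqp)))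
        (lt_max_of_lt_right (nth_lt_nth hlt hr'))))
    · exact he
    · exact absurd h.symm (ne_of_lt (max_lt (lt_max_of_lt_left (nth_lt_nth hgt (hr.trans_le hqp)))
        (lt_max_of_lt_right (nth_lt_nth hgt hr))))
  rw [hL, hR, val_eq_map A, val_eq_map B]
  obtain ⟨k, hk⟩ : ∃ k, A.card = B.card + k := ⟨A.card - B.card, (Nat.add_sub_cancel' hqp).symm⟩
  rw [hk, Multiset.range_add, Multiset.map_add, Multiset.map_add]
  have h1 : (Multiset.range k).map ((fun r => if r < B.card then min (nth A r) (nth B r) else nth A r) ∘ (B.card + ·))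
      = ((Multiset.range k).map (B.card + ·)).map (nth A) := by
    rw [Multiset.map_map]
    apply Multiset.map_congr rfl
    intro x _
    simp only [Function.comp_apply]
    rw [if_neg (by omega)]
  rw [Multiset.map_map, h1, Multiset.map_map]
  have h2 : (Multiset.range B.card).map (fun r => if r < B.card then min (nth A r) (nth B r) else nth A r)
      = (Multiset.range B.card).map (fun r => min (nth A r) (nth B r)) := by
    apply Multiset.map_congr rfl
    intro x hx
    rw [Multiset.mem_range] at hx
    rw [if_pos hx]
  rw [h2, add_comm _ ((Multiset.range B.card).map fun r => max (nth A r) (nth B r)), ← add_assoc,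
    add_comm ((Multiset.range B.card).map fun r => max (nth A r) (nth B r)), map_minmax]
  rw [add_right_comm]

lemma sum_id_of_val {s : Finset ℕ} {n : ℕ} {f : ℕ → ℕ} (h : s.val = (Multiset.range n).map f) :
    s.sum id = ∑ r ∈ Finset.range n, f r := by
  rw [Finset.sum, h, Finset.sum, Finset.range_val]
  simp

lemma swapR_val (hqp : B.card ≤ A.card) : (swapR A B).val = (Multiset.range B.card).map
    (fun r => max (nth A r) (nth B r)) := by
  rw [swapR, Finset.image_val_of_injOn, Finset.range_val]
  intro r hr r' hr' h
  simp only [Finset.coe_range, Set.mem_Iio] at hr hr'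
  rcases lt_trichotomy r r' with hlt | he | hgt
  · exact absurd h (ne_of_lt (max_lt (lt_max_of_lt_left (nth_lt_nth hlt (hr'.trans_le hqp)))
      (lt_max_of_lt_right (nth_lt_nth hlt hr'))))
  · exact he
  · exact absurd h.symm (ne_of_lt (max_lt (lt_max_of_lt_left (nth_lt_nth hgt (hr.trans_le hqp)))
      (lt_max_of_lt_right (nth_lt_nth hgt hr))))

lemma swapR_sum_lt (hqp : B.card ≤ A.card) {r₀ : ℕ} (hr₀ : r₀ < B.card) (hviol : nth B r₀ < nth A r₀) :
    B.sum id < (swapR A B).sum id := by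
  rw [sum_id_of_val (swapR_val A B hqp), sum_eq B]
  apply Finset.sum_lt_sum
  · intro i _
    exact le_max_right _ _
  · exact ⟨r₀, Finset.mem_range.2 hr₀, lt_max_of_lt_left hviol⟩

end Swap

/-! ### helpers -/

lemma indicator_count (s : Finset ℕ) (x : ℕ) : s.val.count x = if x ∈ s then 1 else 0 :=
  Multiset.count_eq_of_nodup s.nodup

lemma sum_two {sfin : Finset ℕ} (f g : ℕ → ℕ) {a b : ℕ} (ha : a ∈ sfin) (hb : b ∈ sfin)
    (hab : a ≠ b) (hcong : ∀ x ∈ sfin, x ≠ a → x ≠ b → f x = g x)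
    {u v : ℕ} (hsum : f a + f b + u = g a + g b + v) :
    (∑ x ∈ sfin, f x) + u = (∑ x ∈ sfin, g x) + v := by
  have hb' : b ∈ sfin.erase a := Finset.mem_erase.2 ⟨Ne.symm hab, hb⟩
  rw [← Finset.add_sum_erase _ f ha, ← Finset.add_sum_erase _ f hb',
      ← Finset.add_sum_erase _ g ha, ← Finset.add_sum_erase _ g hb']
  have htail : ∑ x ∈ (sfin.erase a).erase b, f x = ∑ x ∈ (sfin.erase a).erase b, g x := by
    refine Finset.sum_congr rfl (fun x hx => ?_)
    have hx1 := Finset.mem_of_mem_erase hx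
    exact hcong x (Finset.mem_of_mem_erase hx1) (Finset.ne_of_mem_erase hx1)
      (Finset.ne_of_mem_erase hx)
  omega

/-! ### the shape -/

section Shape

variable (ν : ℕ → ℕ) (N : ℕ)

/-- number of boxes in column `c`. -/
def K (c : ℕ) : ℕ := ((Finset.range N).filter (fun r => c < ν r)).card

variable {ν N}

lemma lt_K_iff (hmono : ∀ i j, i ≤ j → ν j ≤ ν i) (hN : ∀ i, N ≤ i → ν i = 0) {r c : ℕ} : r < K ν N c ↔ c < ν r := by
  constructor
  · intro h
    by_contra hc
    push_neg at hc
    have hsub : ((Finset.range N).filter (fun r' => c < ν r')) ⊆ Finset.range r := by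
      intro r' hr'
      simp only [Finset.mem_filter, Finset.mem_range] at hr' ⊢
      by_contra hge
      push_neg at hge
      exact absurd hr'.2 (not_lt.2 ((hmono r r' hge).trans hc))
    have hle := Finset.card_le_card hsub
    rw [Finset.card_range] at hle
    exact absurd h (not_lt.2 hle)
  · intro h
    have hrN : r < N := by
      by_contra hge; push_neg at hge
      rw [hN r hge] at h; exact absurd h (Nat.not_lt_zero c)
    have hsub : Finset.range (r + 1) ⊆ (Finset.range N).filter (fun r' => c < ν r') := by
      intro r' hr'
      simp only [Finset.mem_range] at hr'
      simp only [Finset.mem_filter, Finset.mem_range]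
      exact ⟨lt_of_le_of_lt (Nat.lt_succ_iff.1 hr') hrN,
        lt_of_lt_of_le h (hmono r' r (Nat.lt_succ_iff.1 hr'))⟩
    have hle := Finset.card_le_card hsub
    rwa [Finset.card_range] at hle

lemma K_antitone {c c' : ℕ} (h : c ≤ c') : K ν N c' ≤ K ν N c := by
  apply Finset.card_le_card
  intro r hr
  simp only [Finset.mem_filter] at hr ⊢
  exact ⟨hr.1, lt_of_le_of_lt h hr.2⟩

lemma content_card (hmono : ∀ i j, i ≤ j → ν j ≤ ν i) (hN : ∀ i, N ≤ i → ν i = 0) (T : ℕ → ℕ → ℕ) (i : ℕ)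
    (hinj : ∀ r r' c, c < ν r → c < ν r' → T r c = T r' c → r = r') :
    {p : ℕ × ℕ | p.2 < ν p.1 ∧ T p.1 p.2 = i + 1}.ncard
      = ((Finset.range (ν 0)).filter (fun c => ∃ r, c < ν r ∧ T r c = i + 1)).card := by
  have hset : {p : ℕ × ℕ | p.2 < ν p.1 ∧ T p.1 p.2 = i + 1}
      = ↑(((Finset.range N) ×ˢ (Finset.range (ν 0))).filter
          (fun p => p.2 < ν p.1 ∧ T p.1 p.2 = i + 1)) := by
    ext p
    simp only [Set.mem_setOf_eq, Finset.coe_filter, Finset.mem_product, Finset.mem_range,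
      Set.mem_setOf_eq]
    constructor
    · rintro ⟨h1, h2⟩
      refine ⟨⟨?_, lt_of_lt_of_le h1 (hmono 0 p.1 (Nat.zero_le _))⟩, h1, h2⟩
      by_contra hge; push_neg at hge
      rw [hN p.1 hge] at h1; exact Nat.not_lt_zero _ h1
    · tauto
  rw [hset, Set.ncard_coe_finset]
  refine Finset.card_bij (fun p _ => p.2) ?_ ?_ ?_
  · intro p hp
    simp only [Finset.mem_filter, Finset.mem_product, Finset.mem_range] at hp ⊢
    exact ⟨hp.1.2, p.1, hp.2.1, hp.2.2⟩
  · intro p hp p' hp' h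
    have h2 : p.2 = p'.2 := h
    simp only [Finset.mem_filter] at hp hp'
    have heq : T p.1 p.2 = T p'.1 p.2 := by
      rw [hp.2.2, h2]; exact hp'.2.2.symm
    have := hinj p.1 p'.1 p.2 hp.2.1 (h2 ▸ hp'.2.1) heq
    exact Prod.ext this h2
  · intro c hc
    simp only [Finset.mem_filter, Finset.mem_range] at hc
    obtain ⟨hcC, r, hr1, hr2⟩ := hc
    refine ⟨(r, c), ?_, rfl⟩
    simp only [Finset.mem_filter, Finset.mem_product, Finset.mem_range]
    have hrN : r < N := by
      by_contra hge; push_neg at hge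
      rw [hN r hge] at hr1; exact absurd hr1 (Nat.not_lt_zero c)
    exact ⟨⟨hrN, hcC⟩, hr1, hr2⟩

variable (ν N) in
/-- column configuration validity -/
def Valid (μ : ℕ → ℕ) (col : ℕ → Finset ℕ) : Prop :=
  (∀ c, (col c).card = K ν N c) ∧ (∀ c x, x ∈ col c → 1 ≤ x) ∧
  (∀ i, ((Finset.range (ν 0)).filter (fun c => i + 1 ∈ col c)).card = μ i)

variable (ν) in
/-- the potential -/
def Phi (col : ℕ → Finset ℕ) : ℕ := ∑ c ∈ Finset.range (ν 0), (c + 1) * (col c).sum id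

variable {μ : ℕ → ℕ} {M : ℕ}

lemma val_le (hmono : ∀ i j, i ≤ j → ν j ≤ ν i) (hN : ∀ i, N ≤ i → ν i = 0) (hM : ∀ i, M ≤ i → μ i = 0) {col : ℕ → Finset ℕ} (hv : Valid ν N μ col)
    {c x : ℕ} (hx : x ∈ col c) : x ≤ M := by
  have h1 : 1 ≤ x := hv.2.1 c x hx
  have hc0 : c < ν 0 := by
    rw [← lt_K_iff hmono hN (r := 0), ← hv.1 c]
    exact Finset.card_pos.2 ⟨x, hx⟩
  have hmem : c ∈ (Finset.range (ν 0)).filter (fun c' => (x - 1) + 1 ∈ col c') := by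
    simp only [Finset.mem_filter, Finset.mem_range]
    rw [Nat.sub_add_cancel h1]
    exact ⟨hc0, hx⟩
  have hpos : 0 < μ (x - 1) := by
    rw [← hv.2.2 (x - 1)]
    exact Finset.card_pos.2 ⟨c, hmem⟩
  by_contra hgt
  push_neg at hgt
  rw [hM (x - 1) (by omega)] at hpos
  exact absurd hpos (lt_irrefl 0)

variable (ν N M) in
/-- bound on the potential -/
def Bnd : ℕ := ν 0 * (ν 0 * (K ν N 0 * M))

lemma phi_le (hmono : ∀ i j, i ≤ j → ν j ≤ ν i) (hN : ∀ i, N ≤ i → ν i = 0) (hM : ∀ i, M ≤ i → μ i = 0) {col : ℕ → Finset ℕ} (hv : Valid ν N μ col) :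
    Phi ν col ≤ Bnd ν N M := by
  rw [Phi, Bnd]
  calc ∑ c ∈ Finset.range (ν 0), (c + 1) * (col c).sum id
      ≤ ∑ _c ∈ Finset.range (ν 0), ν 0 * (K ν N 0 * M) := by
        refine Finset.sum_le_sum (fun c hc => ?_)
        refine Nat.mul_le_mul ?_ ?_
        · exact Finset.mem_range.1 hc
        · calc (col c).sum id ≤ (col c).card • M :=
                Finset.sum_le_card_nsmul _ _ _ (fun x hx => val_le hmono hN hM hv hx)
          _ = (col c).card * M := by rw [smul_eq_mul]
          _ ≤ K ν N 0 * M := by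
              rw [hv.1 c]
              exact Nat.mul_le_mul_right M (K_antitone (Nat.zero_le c))
    _ = ν 0 * (ν 0 * (K ν N 0 * M)) := by
        rw [Finset.sum_const, Finset.card_range, smul_eq_mul]

lemma step (hmono : ∀ i j, i ≤ j → ν j ≤ ν i) (hN : ∀ i, N ≤ i → ν i = 0) (hM : ∀ i, M ≤ i → μ i = 0) {col : ℕ → Finset ℕ} (hv : Valid ν N μ col)
    {c r : ℕ} (hr : r < K ν N (c + 1)) (hviol : nth (col (c + 1)) r < nth (col c) r) :
    ∃ col2, Valid ν N μ col2 ∧ Phi ν col + 1 ≤ Phi ν col2 := by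
  set A := col c with hA
  set B := col (c + 1) with hB
  have hcA : A.card = K ν N c := hv.1 c
  have hcB : B.card = K ν N (c + 1) := hv.1 (c + 1)
  have hqp : B.card ≤ A.card := by rw [hcA, hcB]; exact K_antitone (Nat.le_succ c)
  have hc1C : c + 1 < ν 0 := by
    rw [← lt_K_iff hmono hN (r := 0)]
    omega
  have hcC : c < ν 0 := by omega
  have hne : ¬ (c = c + 1) := by omega
  have hne2 : ¬ (c + 1 = c) := by omega
  have ec : (if c = c then swapL A B else if c = c + 1 then swapR A B else col c)
      = swapL A B := if_pos rfl
  have ec1 : (if c + 1 = c then swapL A B else if c + 1 = c + 1 then swapR A B else col (c + 1))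
      = swapR A B := by rw [if_neg hne2, if_pos rfl]
  refine ⟨fun x => if x = c then swapL A B else if x = c + 1 then swapR A B else col x, ?_, ?_⟩
  · refine ⟨?_, ?_, ?_⟩
    · intro x
      beta_reduce
      rcases eq_or_ne x c with rfl | h1
      · rw [ec, swapL_card A B hqp, hcA]
      · rcases eq_or_ne x (c + 1) with rfl | h2
        · rw [ec1, swapR_card A B hqp, hcB]
        · rw [if_neg h1, if_neg h2]
          exact hv.1 x
    · intro x y hy
      beta_reduce at hy
      have hmem : y ∈ A ∨ y ∈ B → 1 ≤ y := by
        rintro (h | h)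
        · exact hv.2.1 c y h
        · exact hv.2.1 (c + 1) y h
      rcases eq_or_ne x c with rfl | h1
      · rw [ec] at hy
        apply hmem
        have hy2 : y ∈ (swapL A B).val + (swapR A B).val := by
          rw [Multiset.mem_add]; exact Or.inl hy
        rw [swap_val A B hqp, Multiset.mem_add] at hy2
        exact hy2
      · rcases eq_or_ne x (c + 1) with rfl | h2
        · rw [ec1] at hy
          apply hmem
          have hy2 : y ∈ (swapL A B).val + (swapR A B).val := by
            rw [Multiset.mem_add]; exact Or.inr hy
          rw [swap_val A B hqp, Multiset.mem_add] at hy2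
          exact hy2
        · rw [if_neg h1, if_neg h2] at hy
          exact hv.2.1 x y hy
    · intro i
      rw [← hv.2.2 i, Finset.card_filter, Finset.card_filter]
      have key := sum_two
        (fun x => if i + 1 ∈ (if x = c then swapL A B else if x = c + 1 then swapR A B else col x) then 1 else 0)
        (fun x => if i + 1 ∈ col x then 1 else 0)
        (Finset.mem_range.2 hcC) (Finset.mem_range.2 hc1C) (by omega)
        (fun x _ hx1 hx2 => by beta_reduce; rw [if_neg hx1, if_neg hx2])
        (u := 0) (v := 0) ?_
      · simpa using key
      · beta_reduce
        rw [ec, ec1]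
        have hcount : (swapL A B).val.count (i + 1) + (swapR A B).val.count (i + 1)
            = A.val.count (i + 1) + B.val.count (i + 1) := by
          rw [← Multiset.count_add, swap_val A B hqp, Multiset.count_add]
        rw [indicator_count, indicator_count, indicator_count, indicator_count] at hcount
        have eA : (if i + 1 ∈ col c then (1:ℕ) else 0) = (if i + 1 ∈ A then 1 else 0) := rfl
        have eB : (if i + 1 ∈ col (c + 1) then (1:ℕ) else 0) = (if i + 1 ∈ B then 1 else 0) := rfl
        rw [eA, eB]
        omega
  · have hkey : (swapL A B).sum id + (swapR A B).sum id = A.sum id + B.sum id := by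
      have h1 : ∀ s : Finset ℕ, s.sum id = s.val.sum := by
        intro s
        rw [Finset.sum]
        simp
      rw [h1, h1, h1, h1, ← Multiset.sum_add, swap_val A B hqp, Multiset.sum_add]
    have hlt : B.sum id < (swapR A B).sum id := by
      refine swapR_sum_lt A B hqp (r₀ := r) (by omega) hviol
    rw [Phi, Phi]
    have hmain := sum_two
      (fun x => (x + 1) * ((if x = c then swapL A B else if x = c + 1 then swapR A B else col x)).sum id)
      (fun x => (x + 1) * (col x).sum id)
      (Finset.mem_range.2 hcC) (Finset.mem_range.2 hc1C) (by omega)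
      (fun x _ hx1 hx2 => by beta_reduce; rw [if_neg hx1, if_neg hx2])
      (u := B.sum id) (v := (swapR A B).sum id) ?_
    · omega
    · beta_reduce
      rw [ec, ec1]
      have eA : (col c).sum id = A.sum id := rfl
      have eB : (col (c + 1)).sum id = B.sum id := rfl
      rw [eA, eB]
      set SL := (swapL A B).sum id
      set SR := (swapR A B).sum id
      set SA := A.sum id
      set SB := B.sum id
      have hmul : (c + 1) * SL + (c + 1) * SR = (c + 1) * SA + (c + 1) * SB := by
        rw [← Nat.mul_add, hkey, Nat.mul_add]
      have e1 : (c + 1 + 1) * SR = (c + 1) * SR + SR := by ring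
      have e2 : (c + 1 + 1) * SB = (c + 1) * SB + SB := by ring
      omega

lemma phi_rec (hmono : ∀ i j, i ≤ j → ν j ≤ ν i) (hN : ∀ i, N ≤ i → ν i = 0) (hM : ∀ i, M ≤ i → μ i = 0) (n : ℕ) :
    ∀ col, Valid ν N μ col → Bnd ν N M ≤ Phi ν col + n →
    ∃ col', Valid ν N μ col' ∧
      ∀ c r, r < K ν N (c + 1) → nth (col' c) r ≤ nth (col' (c + 1)) r := by
  induction n with
  | zero =>
    intro col hv hb
    by_cases hcomp : ∀ c r, r < K ν N (c + 1) → nth (col c) r ≤ nth (col (c + 1)) r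
    · exact ⟨col, hv, hcomp⟩
    · push_neg at hcomp
      obtain ⟨c, r, hr, hviol⟩ := hcomp
      obtain ⟨col2, hv2, hphi⟩ := step hmono hN hM hv hr hviol
      have := phi_le hmono hN hM hv2
      omega
  | succ n ih =>
    intro col hv hb
    by_cases hcomp : ∀ c r, r < K ν N (c + 1) → nth (col c) r ≤ nth (col (c + 1)) r
    · exact ⟨col, hv, hcomp⟩
    · push_neg at hcomp
      obtain ⟨c, r, hr, hviol⟩ := hcomp
      obtain ⟨col2, hv2, hphi⟩ := step hmono hN hM hv hr hviol
      exact ih col2 hv2 (by omega)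

lemma exists_compatible (hmono : ∀ i j, i ≤ j → ν j ≤ ν i) (hN : ∀ i, N ≤ i → ν i = 0) (hM : ∀ i, M ≤ i → μ i = 0) {col : ℕ → Finset ℕ}
    (hv : Valid ν N μ col) :
    ∃ col', Valid ν N μ col' ∧
      ∀ c r, r < K ν N (c + 1) → nth (col' c) r ≤ nth (col' (c + 1)) r :=
  phi_rec hmono hN hM (Bnd ν N M) col hv (Nat.le_add_left _ _)

end Shape

end ColDist

end

/-- No column of the filling contains two equal entries. -/
def ColumnDistinct (ν : ℕ → ℕ) (T : ℕ → ℕ → ℕ) : Prop :=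
  ∀ r r' c, r < r' → c < ν r' → T r c ≠ T r' c

open ColDist in
/-- There is a filling of shape `ν` with content `μ` with no repeated entry in any
column iff there is a semistandard filling of shape `ν` with content `μ`. -/
theorem columnDistinct_filling_iff_ssyt (d : ℕ) (ν μ : ℕ → ℕ)
    (hν : IsPartitionOf d ν) (hμ : IsPartitionOf d μ) :
    (∃ T, IsFilling ν μ T ∧ ColumnDistinct ν T) ↔
    (∃ T, IsFilling ν μ T ∧ IsSemistandard ν T) := by
  classical
  obtain ⟨hmono, N, hN, -⟩ := hν
  obtain ⟨-, M, hM, -⟩ := hμ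
  constructor
  · rintro ⟨T, ⟨hpos, hcontent⟩, hcd⟩
    set col : ℕ → Finset ℕ := fun c => (Finset.range (K ν N c)).image (fun r => T r c)
      with hcol
    have hinjT : ∀ r r' c, c < ν r → c < ν r' → T r c = T r' c → r = r' := by
      intro r r' c h1 h2 he
      rcases lt_trichotomy r r' with h | h | h
      · exact absurd he (hcd r r' c h h2)
      · exact h
      · exact absurd he.symm (hcd r' r c h h1)
    have hmemcol : ∀ c x, x ∈ col c ↔ ∃ r, c < ν r ∧ T r c = x := by
      intro c x
      simp only [hcol, Finset.mem_image, Finset.mem_range]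
      constructor
      · rintro ⟨r, hr, rfl⟩
        exact ⟨r, (lt_K_iff hmono hN).1 hr, rfl⟩
      · rintro ⟨r, hr, rfl⟩
        exact ⟨r, (lt_K_iff hmono hN).2 hr, rfl⟩
    have hvalid : Valid ν N μ col := by
      refine ⟨?_, ?_, ?_⟩
      · intro c
        rw [hcol]
        beta_reduce
        rw [Finset.card_image_of_injOn, Finset.card_range]
        intro r hr r' hr' he
        simp only [Finset.coe_range, Set.mem_Iio] at hr hr'
        exact hinjT r r' c ((lt_K_iff hmono hN).1 hr) ((lt_K_iff hmono hN).1 hr') he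
      · intro c x hx
        obtain ⟨r, hr, rfl⟩ := (hmemcol c x).1 hx
        exact hpos r c hr
      · intro i
        rw [← hcontent i, content_card hmono hN T i hinjT]
        congr 1
        apply Finset.filter_congr
        intro c _
        exact hmemcol c (i + 1)
    obtain ⟨col', hv', hcomp⟩ := exists_compatible hmono hN hM hvalid
    have hcardK : ∀ c, (col' c).card = K ν N c := hv'.1
    refine ⟨fun r c => nth (col' c) r, ⟨?_, ?_⟩, ?_, ?_⟩
    · intro r c hc
      have hr : r < (col' c).card := by
        rw [hcardK c]; exact (lt_K_iff hmono hN).2 hc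
      exact hv'.2.1 c _ (nth_mem hr)
    · intro i
      have hinj' : ∀ r r' c, c < ν r → c < ν r' →
          nth (col' c) r = nth (col' c) r' → r = r' := by
        intro r r' c h1 h2 he
        rcases lt_trichotomy r r' with h | h | h
        · exact absurd he (nth_lt_nth h (by rw [hcardK c]; exact (lt_K_iff hmono hN).2 h2)).ne
        · exact h
        · exact absurd he.symm
            (nth_lt_nth h (by rw [hcardK c]; exact (lt_K_iff hmono hN).2 h1)).ne
      rw [content_card hmono hN _ i hinj', ← hv'.2.2 i]
      congr 1
      apply Finset.filter_congr
      intro c _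
      constructor
      · rintro ⟨r, hr, he⟩
        rw [← he]
        exact nth_mem (by rw [hcardK c]; exact (lt_K_iff hmono hN).2 hr)
      · intro hmem
        obtain ⟨r, hr, he⟩ := exists_nth hmem
        exact ⟨r, (lt_K_iff hmono hN).1 (by rw [← hcardK c]; exact hr), he⟩
    · intro r c c' hcc hc'
      have hchain : ∀ k, r < K ν N (c + k) → nth (col' c) r ≤ nth (col' (c + k)) r := by
        intro k
        induction k with
        | zero => intro _; exact le_refl _
        | succ k ih =>
          intro hk
          rw [Nat.add_succ] at hk ⊢
          have hk0 : r < K ν N (c + k) :=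
            lt_of_lt_of_le hk (K_antitone (Nat.le_succ _))
          exact le_trans (ih hk0) (hcomp (c + k) r hk)
      have h2 := hchain (c' - c)
      rw [Nat.add_sub_cancel' hcc] at h2
      exact h2 ((lt_K_iff hmono hN).2 hc')
    · intro r r' c hrr' hc
      exact nth_lt_nth hrr' (by rw [hcardK c]; exact (lt_K_iff hmono hN).2 hc)
  · rintro ⟨T, hf, hrow, hcolstrict⟩
    exact ⟨T, hf, fun r r' c h1 h2 => (hcolstrict r r' c h1 h2).ne⟩
end

section
/- Let Δ_n = {(r,c) ∈ ℕ² : 1 ≤ r, c ≤ n, r + c ≤ n+1} and define β(r,c) = n + 2 - r - c. Let ν be a partition of n(n+1)/2. Then there exists a partition of Δ_n into blocks whose sizes are the column lengths of ν such that β is injective on each block, if and only if ν dominates the staircase partition ρ(n) = (n, n-1, ..., 1). -/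
/-- The transpose partition: `conj f i` is the length of the `(i+1)`-st column of `f`. -/
noncomputable def conj (f : ℕ → ℕ) : ℕ → ℕ := fun i => {j : ℕ | i < f j}.ncard

/-- The staircase partition `ρ(n) = (n, n-1, ..., 1)`. -/
def staircase (n : ℕ) : ℕ → ℕ := fun i => n - i

/-- The triangular grid `Δ_n = {(r,c) : 1 ≤ r, c, r+c ≤ n+1}`. -/
def Delta (n : ℕ) : Set (ℕ × ℕ) := {p | 1 ≤ p.1 ∧ 1 ≤ p.2 ∧ p.1 + p.2 ≤ n + 1}

/-- `β(r,c) = n + 2 - r - c`. -/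
def beta (n : ℕ) (p : ℕ × ℕ) : ℕ := n + 2 - p.1 - p.2


set_option linter.unusedSectionVars false

lemma down_mem_iff_lt_card {S : Finset ℕ} (h : ∀ a b : ℕ, a ≤ b → b ∈ S → a ∈ S) (i : ℕ) :
    i ∈ S ↔ i < S.card := by
  constructor
  · intro hi
    have hsub : Finset.range (i+1) ⊆ S := by
      intro a ha
      exact h a i (by simpa [Nat.lt_succ_iff] using ha) hi
    have := Finset.card_le_card hsub
    simpa using this
  · intro hi
    by_contra hns
    have hsub : S ⊆ Finset.range i := by
      intro b hb
      rw [Finset.mem_range]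
      by_contra hbi
      exact hns (h i b (le_of_not_gt hbi) hb)
    have := Finset.card_le_card hsub
    simp at this
    omega

lemma tri_succ (n : ℕ) : (n+1) * (n+2) / 2 = n * (n+1) / 2 + (n+1) := by
  obtain ⟨t, ht⟩ := Nat.even_mul_succ_self n
  have h3 : (n+1) * (n+2) = n*(n+1) + 2*(n+1) := by ring
  omega

lemma sum_stair (m : ℕ) : ∑ i ∈ Finset.range m, (m - i) = m * (m+1) / 2 := by
  induction m with
  | zero => simp
  | succ k ih =>
    rw [Finset.sum_range_succ']
    have : ∀ i ∈ Finset.range k, (k + 1 - (i+1)) = k - i := by intro i _; omega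
    rw [Finset.sum_congr rfl this, ih, tri_succ]
    omega

lemma sum_stair_ge (m k : ℕ) (hk : m ≤ k) :
    ∑ i ∈ Finset.range k, (m - i) = m * (m+1) / 2 := by
  rw [← sum_stair m]
  symm
  apply Finset.sum_subset (Finset.range_subset_range.2 hk)
  intro i _ hi
  simp at hi ⊢
  omega


section conjlemmas

variable {f : ℕ → ℕ} {N : ℕ} (hmono : ∀ i j, i ≤ j → f j ≤ f i) (hN : ∀ i, N ≤ i → f i = 0)

include hmono hN

lemma conj_eq_card (j : ℕ) :
    conj f j = ((Finset.range N).filter (fun i => j < f i)).card := by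
  have hset : {i : ℕ | j < f i} = ↑((Finset.range N).filter (fun i => j < f i)) := by
    ext i
    simp only [Set.mem_setOf_eq, Finset.coe_filter, Finset.mem_range, Set.mem_setOf_eq]
    constructor
    · intro hi
      refine ⟨?_, hi⟩
      by_contra hiN
      rw [hN i (le_of_not_gt hiN)] at hi
      omega
    · exact fun h => h.2
  rw [conj, hset, Set.ncard_coe_finset]

lemma lt_conj_iff (i j : ℕ) : i < conj f j ↔ j < f i := by
  rw [conj_eq_card hmono hN]
  rw [← down_mem_iff_lt_card (S := (Finset.range N).filter (fun i => j < f i))]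
  · simp only [Finset.mem_filter, Finset.mem_range]
    constructor
    · exact fun h => h.2
    · intro hi
      refine ⟨?_, hi⟩
      by_contra hiN
      rw [hN i (le_of_not_gt hiN)] at hi
      omega
  · intro a b hab hb
    simp only [Finset.mem_filter, Finset.mem_range] at hb ⊢
    exact ⟨lt_of_le_of_lt hab hb.1, lt_of_lt_of_le hb.2 (hmono a b hab)⟩

lemma conj_le_iff (c j : ℕ) : conj f j ≤ c ↔ f c ≤ j := by
  have := lt_conj_iff hmono hN c j
  omega

lemma conj_le_bound (j : ℕ) : conj f j ≤ N := by
  rw [conj_eq_card hmono hN]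
  calc ((Finset.range N).filter (fun i => j < f i)).card ≤ (Finset.range N).card :=
        Finset.card_le_card (Finset.filter_subset _ _)
    _ = N := Finset.card_range N

lemma conj_eq_zero (j : ℕ) (hj : f 0 ≤ j) : conj f j = 0 := by
  have := conj_le_iff hmono hN 0 j
  omega

lemma sum_min_conj (k M : ℕ) (hM : f 0 ≤ M) :
    ∑ j ∈ Finset.range M, min (conj f j) k = ∑ i ∈ Finset.range k, f i := by
  have h1 : ∀ j, ((Finset.range k).filter (fun i => j < f i)) = Finset.range (min (conj f j) k) := by
    intro j
    ext i
    simp only [Finset.mem_filter, Finset.mem_range, lt_min_iff]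
    rw [← lt_conj_iff hmono hN]
    tauto
  have h2 : ∀ i, i < k → ((Finset.range M).filter (fun j => j < f i)) = Finset.range (f i) := by
    intro i _
    ext j
    simp only [Finset.mem_filter, Finset.mem_range]
    constructor
    · exact fun h => h.2
    · intro h
      exact ⟨lt_of_lt_of_le h (le_trans (hmono 0 i (Nat.zero_le i)) hM), h⟩
  calc ∑ j ∈ Finset.range M, min (conj f j) k
      = ∑ j ∈ Finset.range M, ((Finset.range k).filter (fun i => j < f i)).card := by
        simp [h1]
    _ = ∑ j ∈ Finset.range M, ∑ i ∈ Finset.range k, if j < f i then 1 else 0 := by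
        simp only [Finset.card_filter]
    _ = ∑ i ∈ Finset.range k, ∑ j ∈ Finset.range M, if j < f i then 1 else 0 :=
        Finset.sum_comm
    _ = ∑ i ∈ Finset.range k, ((Finset.range M).filter (fun j => j < f i)).card := by
        simp only [Finset.card_filter]
    _ = ∑ i ∈ Finset.range k, f i := by
        apply Finset.sum_congr rfl
        intro i hi
        rw [h2 i (Finset.mem_range.1 hi)]
        simp

lemma sum_conj (M : ℕ) (hM : f 0 ≤ M) :
    ∑ j ∈ Finset.range M, conj f j = ∑ i ∈ Finset.range N, f i := by
  rw [← sum_min_conj hmono hN N M hM]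
  apply Finset.sum_congr rfl
  intro j _
  exact (min_eq_left (conj_le_bound hmono hN j)).symm

end conjlemmas

lemma delta_finite (n : ℕ) : (Delta n).Finite := by
  apply (Set.finite_Icc ((1:ℕ),(1:ℕ)) (n+1, n+1)).subset
  rintro ⟨r, c⟩ ⟨h1, h2, h3⟩
  simp only [Set.mem_Icc, Prod.mk_le_mk]
  exact ⟨⟨h1, h2⟩, by omega, by omega⟩

lemma blocks_dominates (n : ℕ) (ν : ℕ → ℕ) (hν : IsPartitionOf (n*(n+1)/2) ν)
    (B : ℕ → Set (ℕ×ℕ))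
    (hsub : ∀ j, B j ⊆ Delta n)
    (hcov : (⋃ j, B j) = Delta n)
    (hcard : ∀ j, (B j).ncard = conj ν j)
    (hinj : ∀ j, Set.InjOn (beta n) (B j)) :
    Dominates ν (staircase n) := by
  obtain ⟨hmono, N, hN, hsum⟩ := hν
  intro k
  have hBfin : ∀ j, (B j).Finite := fun j => (delta_finite n).subset (hsub j)
  set J := ν 0 with hJ
  have hBempty : ∀ j, J ≤ j → B j = ∅ := by
    intro j hj
    have h0 : (B j).ncard = 0 := by rw [hcard]; exact conj_eq_zero hmono hN j hj
    exact (Set.ncard_eq_zero (hBfin j)).1 h0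
  set D : Finset (ℕ×ℕ) := ((Finset.range k).sigma (fun i => Finset.range (n - i))).image
      (fun x => (x.2+1, n - x.1 - x.2)) with hD
  have hmemD : ∀ p ∈ D, p ∈ Delta n ∧ 1 ≤ beta n p ∧ beta n p ≤ k := by
    intro p hp
    simp only [hD, Finset.mem_image] at hp
    obtain ⟨x, hx, rfl⟩ := hp
    obtain ⟨i, t⟩ := x
    simp only [Finset.mem_sigma, Finset.mem_range] at hx
    obtain ⟨hik, htn⟩ := hx
    refine ⟨⟨?_, ?_, ?_⟩, ?_, ?_⟩ <;> simp [Delta, beta] <;> omega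
  have hDcard : D.card = ∑ i ∈ Finset.range k, (n - i) := by
    rw [hD, Finset.card_image_of_injOn, Finset.card_sigma]
    · simp
    · rintro ⟨i, t⟩ hx ⟨i', t'⟩ hy hxy
      simp only [Finset.mem_coe, Finset.mem_sigma, Finset.mem_range] at hx hy
      simp only [Prod.mk.injEq] at hxy
      have h1 : i = i' := by omega
      have h2 : t = t' := by omega
      subst h1; subst h2; rfl
  have bf : ∀ j, Finset (ℕ×ℕ) := fun j => (hBfin j).toFinset
  have hDsub2 : D ⊆ (Finset.range J).biUnion (fun j => (hBfin j).toFinset ∩ D) := by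
    intro p hp
    have hpD : p ∈ Delta n := (hmemD p hp).1
    rw [← hcov] at hpD
    obtain ⟨j, hj⟩ := Set.mem_iUnion.1 hpD
    have hjJ : j < J := by
      by_contra hjJ
      rw [hBempty j (le_of_not_gt hjJ)] at hj
      exact absurd hj (Set.notMem_empty p)
    rw [Finset.mem_biUnion]
    exact ⟨j, Finset.mem_range.2 hjJ, Finset.mem_inter.2 ⟨(Set.Finite.mem_toFinset _).2 hj, hp⟩⟩
  have hperj : ∀ j, ((hBfin j).toFinset ∩ D).card ≤ min (conj ν j) k := by
    intro j
    rw [le_min_iff]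
    constructor
    · calc ((hBfin j).toFinset ∩ D).card ≤ (hBfin j).toFinset.card :=
            Finset.card_le_card (Finset.inter_subset_left)
        _ = (B j).ncard := (Set.ncard_eq_toFinset_card _ (hBfin j)).symm
        _ = conj ν j := hcard j
    · have hmap : ∀ p ∈ (hBfin j).toFinset ∩ D, beta n p ∈ Finset.Icc 1 k := by
        intro p hp
        have := hmemD p (Finset.mem_inter.1 hp).2
        rw [Finset.mem_Icc]
        exact ⟨this.2.1, this.2.2⟩
      have hinj' : Set.InjOn (beta n) ↑((hBfin j).toFinset ∩ D) := by
        apply (hinj j).mono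
        intro p hp
        have := (Finset.mem_inter.1 hp).1
        exact (Set.Finite.mem_toFinset _).1 this
      calc ((hBfin j).toFinset ∩ D).card ≤ (Finset.Icc 1 k).card :=
            Finset.card_le_card_of_injOn _ hmap hinj'
        _ = k := by simp
  calc ∑ i ∈ Finset.range k, staircase n i = D.card := hDcard.symm
    _ ≤ ∑ j ∈ Finset.range J, ((hBfin j).toFinset ∩ D).card :=
        le_trans (Finset.card_le_card hDsub2) (Finset.card_biUnion_le)
    _ ≤ ∑ j ∈ Finset.range J, min (conj ν j) k := Finset.sum_le_sum (fun j _ => hperj j)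
    _ = ∑ i ∈ Finset.range k, ν i := sum_min_conj hmono hN k J le_rfl

/-- Normalize a partition: support in `range m` and exact sum over `range m`. -/
lemma partition_prep (m : ℕ) (ν : ℕ → ℕ)
    (hν : IsPartitionOf (m*(m+1)/2) ν) (hdom : Dominates ν (staircase m)) :
    (∀ i, m ≤ i → ν i = 0) ∧ ∑ i ∈ Finset.range m, ν i = m*(m+1)/2 := by
  obtain ⟨hmono, N, hN, hsum⟩ := hν
  set K := max N m with hK
  have hKsum : ∑ i ∈ Finset.range K, ν i = m*(m+1)/2 := by
    rw [← hsum]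
    symm
    apply Finset.sum_subset (Finset.range_subset_range.2 (le_max_left N m))
    intro i _ hi
    exact hN i (by simp at hi; omega)
  have h1 : m*(m+1)/2 ≤ ∑ i ∈ Finset.range m, ν i := by
    have := hdom m
    rwa [show ∑ i ∈ Finset.range m, staircase m i = m*(m+1)/2 by
      simp only [staircase]; exact sum_stair_ge m m le_rfl] at this
  have h2 : ∑ i ∈ Finset.range m, ν i ≤ ∑ i ∈ Finset.range K, ν i :=
    Finset.sum_le_sum_of_subset (Finset.range_subset_range.2 (le_max_right N m))
  have heq : ∑ i ∈ Finset.range m, ν i = m*(m+1)/2 := by omega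
  refine ⟨?_, heq⟩
  have hsplit : ∑ i ∈ Finset.range m, ν i + ∑ i ∈ Finset.Ico m K, ν i
      = ∑ i ∈ Finset.range K, ν i := by
    simp only [Finset.range_eq_Ico]
    exact Finset.sum_Ico_consecutive _ (Nat.zero_le m) (le_max_right N m)
  have hzero : ∑ i ∈ Finset.Ico m K, ν i = 0 := by omega
  intro i hi
  rcases lt_or_ge i K with h | h
  · exact Finset.sum_eq_zero_iff.1 hzero i (Finset.mem_Ico.2 ⟨hi, h⟩)
  · exact hN i (le_trans (le_max_left N m) h)

section step

variable {n : ℕ} {ν : ℕ → ℕ}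
  (hmono : ∀ i j, i ≤ j → ν j ≤ ν i)
  (hsupp : ∀ i, n + 1 ≤ i → ν i = 0)
  (hsum : ∑ i ∈ Finset.range (n+1), ν i = (n+1)*(n+2)/2)
  (hdom : Dominates ν (staircase (n+1)))

/-- The strip-removed partition. -/
def mustrip (n : ℕ) (ν : ℕ → ℕ) : ℕ → ℕ := fun i => (ν i - (n+1)) + min (n+1) (ν (i+1))

include hdom in
lemma nu0_ge : n + 1 ≤ ν 0 := by
  have := hdom 1
  simpa [staircase] using this

include hmono in
lemma mu_le (i : ℕ) : mustrip n ν i ≤ ν i := by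
  have h1 : ν (i+1) ≤ ν i := hmono i (i+1) (by omega)
  simp only [mustrip]
  rcases le_total (ν i) (n+1) with h | h
  · rw [min_eq_right (le_trans h1 h)]; omega
  · have : min (n+1) (ν (i+1)) ≤ n+1 := min_le_left _ _
    omega

include hmono in
lemma mu_ge (i : ℕ) : ν (i+1) ≤ mustrip n ν i := by
  have h1 : ν (i+1) ≤ ν i := hmono i (i+1) (by omega)
  simp only [mustrip]
  rcases le_total (ν (i+1)) (n+1) with h | h
  · rw [min_eq_right h]; omega
  · rw [min_eq_left h]; omega

include hmono in
lemma mu_mono : ∀ i j, i ≤ j → mustrip n ν j ≤ mustrip n ν i := by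
  intro i j hij
  rcases Nat.eq_or_lt_of_le hij with rfl | h
  · exact le_rfl
  · calc mustrip n ν j ≤ ν j := mu_le hmono j
      _ ≤ ν (i+1) := hmono (i+1) j h
      _ ≤ mustrip n ν i := mu_ge hmono i

include hsupp in
lemma mu_supp : ∀ i, n + 1 ≤ i → mustrip n ν i = 0 := by
  intro i hi
  simp only [mustrip, hsupp i hi, hsupp (i+1) (by omega)]
  simp

include hmono hdom in
lemma mu_prefix (k : ℕ) :
    ∑ i ∈ Finset.range k, mustrip n ν i + (n+1)
      = ∑ i ∈ Finset.range k, ν i + min (n+1) (ν k) := by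
  induction k with
  | zero => simp [min_eq_left (nu0_ge hdom)]
  | succ k ih =>
    rw [Finset.sum_range_succ]
    conv_rhs => rw [Finset.sum_range_succ]
    have hmu : mustrip n ν k = (ν k - (n+1)) + min (n+1) (ν (k+1)) := rfl
    rw [hmu]
    have hkey : min (n+1) (ν k) + (ν k - (n+1)) = ν k := by
      rcases le_total (ν k) (n+1) with h | h
      · rw [min_eq_right h]; omega
      · rw [min_eq_left h]; omega
    omega

include hmono hsupp hsum hdom in
lemma mu_sum : ∑ i ∈ Finset.range (n+1), mustrip n ν i = n*(n+1)/2 := by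
  have h := mu_prefix hmono hdom (n+1)
  rw [hsum, hsupp (n+1) le_rfl] at h
  have := tri_succ n
  simp at h
  omega

include hmono hsupp hsum hdom in
lemma mu_dom : Dominates (mustrip n ν) (staircase n) := by
  intro k
  -- reduce to k ≤ n+1
  set k' := min k (n+1) with hk'
  have hstair : ∑ i ∈ Finset.range k, staircase n i = ∑ i ∈ Finset.range k', staircase n i := by
    symm
    apply Finset.sum_subset (Finset.range_subset_range.2 (min_le_left _ _))
    intro i hi hni
    simp only [Finset.mem_range] at hi hni
    simp only [staircase]
    omega
  have hmu : ∑ i ∈ Finset.range k', mustrip n ν i ≤ ∑ i ∈ Finset.range k, mustrip n ν i :=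
    Finset.sum_le_sum_of_subset (Finset.range_subset_range.2 (min_le_left _ _))
  rw [hstair]
  refine le_trans ?_ hmu
  -- now k' ≤ n+1
  have hk'le : k' ≤ n + 1 := min_le_right _ _
  have hpre := mu_prefix hmono hdom k'
  rcases le_total (n+1) (ν k') with h | h
  · rw [min_eq_left h] at hpre
    have hd := hdom k'
    have hcmp : ∑ i ∈ Finset.range k', staircase n i ≤ ∑ i ∈ Finset.range k', staircase (n+1) i := by
      apply Finset.sum_le_sum
      intro i _
      simp only [staircase]
      omega
    omega
  · rw [min_eq_right h] at hpre
    have hd := hdom (k'+1)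
    rw [Finset.sum_range_succ, Finset.sum_range_succ] at hd
    have hstep : ∑ i ∈ Finset.range k', staircase (n+1) i
        = ∑ i ∈ Finset.range k', staircase n i + k' := by
      have hterm : ∀ i ∈ Finset.range k', staircase (n+1) i = staircase n i + 1 := by
        intro i hi
        simp only [Finset.mem_range] at hi
        simp only [staircase]
        omega
      rw [Finset.sum_congr rfl hterm, Finset.sum_add_distrib]
      simp
    have hlast : staircase (n+1) k' = n + 1 - k' := rfl
    omega

end step

section conjstep

variable {n : ℕ} {ν : ℕ → ℕ}
  (hmono : ∀ i j, i ≤ j → ν j ≤ ν i)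
  (hsupp : ∀ i, n + 1 ≤ i → ν i = 0)
  (hsum : ∑ i ∈ Finset.range (n+1), ν i = (n+1)*(n+2)/2)
  (hdom : Dominates ν (staircase (n+1)))

include hmono hsupp in
lemma conj_mu_le (j : ℕ) : conj (mustrip n ν) j ≤ conj ν j := by
  by_contra hcon
  push_neg at hcon
  have h1 : j < mustrip n ν (conj ν j) :=
    (lt_conj_iff (mu_mono hmono) (mu_supp hsupp) _ _).1 hcon
  have h2 : mustrip n ν (conj ν j) ≤ ν (conj ν j) := mu_le hmono _
  have h3 : ν (conj ν j) ≤ j := (conj_le_iff hmono hsupp _ _).1 le_rfl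
  omega

include hmono hsupp in
lemma conj_nu_le (j : ℕ) : conj ν j ≤ conj (mustrip n ν) j + 1 := by
  rw [conj_le_iff hmono hsupp]
  have h1 : ν (conj (mustrip n ν) j + 1) ≤ mustrip n ν (conj (mustrip n ν) j) :=
    mu_ge hmono _
  have h2 : mustrip n ν (conj (mustrip n ν) j) ≤ j :=
    (conj_le_iff (mu_mono hmono) (mu_supp hsupp) _ _).1 le_rfl
  omega

include hmono hsupp hsum hdom in
lemma S_card :
    ((Finset.range (ν 0)).filter (fun j => conj (mustrip n ν) j < conj ν j)).card = n + 1 := by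
  set S := (Finset.range (ν 0)).filter (fun j => conj (mustrip n ν) j < conj ν j) with hS
  have hsumν : ∑ j ∈ Finset.range (ν 0), conj ν j = (n+1)*(n+2)/2 := by
    rw [sum_conj hmono hsupp (ν 0) le_rfl, hsum]
  have hsumμ : ∑ j ∈ Finset.range (ν 0), conj (mustrip n ν) j = n*(n+1)/2 := by
    rw [sum_conj (mu_mono hmono) (mu_supp hsupp) (ν 0) (le_trans (mu_le hmono 0) le_rfl)]
    exact mu_sum hmono hsupp hsum hdom
  have hdiff : ∑ j ∈ Finset.range (ν 0), (conj ν j - conj (mustrip n ν) j) = n + 1 := by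
    have hadd : ∑ j ∈ Finset.range (ν 0),
        (conj (mustrip n ν) j + (conj ν j - conj (mustrip n ν) j))
        = ∑ j ∈ Finset.range (ν 0), conj ν j := by
      apply Finset.sum_congr rfl
      intro j _
      have := conj_mu_le hmono hsupp (n := n) j
      omega
    rw [Finset.sum_add_distrib] at hadd
    have := tri_succ n
    omega
  have hfilter : ∑ j ∈ S, (conj ν j - conj (mustrip n ν) j) = n + 1 := by
    rw [← hdiff]
    apply Finset.sum_subset (Finset.filter_subset _ _)
    intro j _ hj
    rw [Finset.mem_filter] at hj
    push_neg at hj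
    have h1 : conj (mustrip n ν) j ≤ conj ν j := conj_mu_le hmono hsupp j
    rcases lt_or_ge j (ν 0) with h | h
    · have := hj (Finset.mem_range.2 h)
      omega
    · have h0 : conj ν j = 0 := conj_eq_zero hmono hsupp j h
      omega
  have hone : ∀ j ∈ S, conj ν j - conj (mustrip n ν) j = 1 := by
    intro j hj
    rw [hS, Finset.mem_filter] at hj <;> try rw [Finset.mem_filter] at hj
    have := conj_nu_le hmono hsupp (n := n) j
    omega
  rw [Finset.sum_congr rfl hone] at hfilter
  simpa using hfilter

end conjstep


lemma exists_blocks (n : ℕ) (ν : ℕ → ℕ) (hν : IsPartitionOf (n*(n+1)/2) ν)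
    (hdom : Dominates ν (staircase n)) :
    ∃ B : ℕ → Set (ℕ × ℕ),
      (∀ j, B j ⊆ Delta n) ∧
      (∀ j j', j ≠ j' → Disjoint (B j) (B j')) ∧
      (⋃ j, B j) = Delta n ∧
      (∀ j, (B j).ncard = conj ν j) ∧
      (∀ j, Set.InjOn (beta n) (B j)) := by
  induction n generalizing ν with
  | zero =>
    obtain ⟨hmono, N, hN, hsum⟩ := hν
    have hz : ∀ i, ν i = 0 := by
      intro i
      rcases lt_or_ge i N with h | h
      · exact Finset.sum_eq_zero_iff.1 (by simpa using hsum) i (Finset.mem_range.2 h)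
      · exact hN i h
    have hconj : ∀ j, conj ν j = 0 := by
      intro j
      apply conj_eq_zero hmono hN
      rw [hz 0]
      exact Nat.zero_le j
    refine ⟨fun _ => ∅, fun j => Set.empty_subset _, fun j j' _ => disjoint_bot_left, ?_, ?_, ?_⟩
    · rw [Set.iUnion_empty]
      ext ⟨r, c⟩
      simp only [Set.mem_empty_iff_false, Delta, Set.mem_setOf_eq, false_iff]
      omega
    · intro j
      rw [Set.ncard_empty, hconj j]
    · intro j
      exact Set.injOn_empty _
  | succ n ih =>
    have hν' : IsPartitionOf ((n+1)*((n+1)+1)/2) ν := hν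
    obtain ⟨hmono, _⟩ := hν
    obtain ⟨hsupp, hsum⟩ := partition_prep (n+1) ν hν' hdom
    set μ := mustrip n ν with hμ
    have hμmono := mu_mono (n := n) hmono
    have hμsupp := mu_supp hsupp
    have hμsum : ∑ i ∈ Finset.range (n+1), μ i = n*(n+1)/2 := mu_sum hmono hsupp hsum hdom
    have hμpart : IsPartitionOf (n*(n+1)/2) μ := ⟨hμmono, n+1, hμsupp, hμsum⟩
    have hμdom : Dominates μ (staircase n) := mu_dom hmono hsupp hsum hdom
    obtain ⟨B', hs', hd', hc', hn', hi'⟩ := ih μ hμpart hμdom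
    set S := (Finset.range (ν 0)).filter (fun j => conj μ j < conj ν j) with hSdef
    have hScard : S.card = n + 1 := S_card hmono hsupp hsum hdom
    set e : {x // x ∈ S} ≃ Fin (n+1) := S.equivFin.trans (finCongr hScard) with he
    set pt : Fin (n+1) → ℕ × ℕ := fun t => ((t:ℕ)+1, n+1-(t:ℕ)) with hpt
    have hptDelta : ∀ t, pt t ∈ Delta (n+1) := by
      intro t
      have := t.2
      refine ⟨by simp [hpt], ?_, ?_⟩ <;> simp only [hpt] <;> omega
    have hptsum : ∀ t, (pt t).1 + (pt t).2 = n + 2 := by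
      intro t
      have := t.2
      simp only [hpt]
      omega
    have hptinj : Function.Injective pt := by
      intro a b hab
      have h1 : (a:ℕ)+1 = (b:ℕ)+1 := congrArg Prod.fst hab
      exact Fin.ext (by omega)
    set E : ℕ → Set (ℕ × ℕ) := fun j => if h : j ∈ S then {pt (e ⟨j, h⟩)} else ∅ with hE
    have hEelim : ∀ j p, p ∈ E j → ∃ h : j ∈ S, p = pt (e ⟨j, h⟩) := by
      intro j p hp
      by_cases h : j ∈ S
      · simp only [hE, dif_pos h, Set.mem_singleton_iff] at hp
        exact ⟨h, hp⟩
      · simp only [hE, dif_neg h] at hp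
        exact absurd hp (Set.notMem_empty p)
    have hB'sum : ∀ j p, p ∈ B' j → p.1 + p.2 ≤ n + 1 := by
      intro j p hp
      exact (hs' j hp).2.2
    have hDn : Delta n ⊆ Delta (n+1) := by
      rintro ⟨r, c⟩ ⟨h1, h2, h3⟩
      exact ⟨h1, h2, by omega⟩
    have hEnotB' : ∀ j j' p, p ∈ E j → p ∈ B' j' → False := by
      intro j j' p hpE hpB
      obtain ⟨h, rfl⟩ := hEelim j p hpE
      have := hB'sum j' _ hpB
      rw [hptsum] at this
      omega
    refine ⟨fun j => B' j ∪ E j, ?_, ?_, ?_, ?_, ?_⟩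
    · intro j p hp
      rcases hp with hp | hp
      · exact hDn (hs' j hp)
      · obtain ⟨h, rfl⟩ := hEelim j p hp
        exact hptDelta _
    · intro j j' hne
      rw [Set.disjoint_left]
      intro p hp hp'
      rcases hp with hp | hp <;> rcases hp' with hp' | hp'
      · exact Set.disjoint_left.1 (hd' j j' hne) hp hp'
      · exact hEnotB' j' j p hp' hp
      · exact hEnotB' j j' p hp hp'
      · obtain ⟨h, rfl⟩ := hEelim j p hp
        obtain ⟨h', heq⟩ := hEelim j' _ hp'
        have := hptinj heq
        have := e.injective this
        rw [Subtype.mk.injEq] at this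
        exact hne this
    · rw [Set.iUnion_union_distrib, hc']
      have hEU : (⋃ j, E j) = Set.range pt := by
        ext p
        constructor
        · intro hp
          obtain ⟨j, hpj⟩ := Set.mem_iUnion.1 hp
          obtain ⟨h, rfl⟩ := hEelim j p hpj
          exact ⟨_, rfl⟩
        · rintro ⟨t, rfl⟩
          rw [Set.mem_iUnion]
          refine ⟨((e.symm t : {x // x ∈ S}) : ℕ), ?_⟩
          have hmem : ((e.symm t : {x // x ∈ S}) : ℕ) ∈ S := (e.symm t).2
          simp only [hE, dif_pos hmem, Set.mem_singleton_iff]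
          congr 1
          rw [show (⟨((e.symm t : {x // x ∈ S}) : ℕ), hmem⟩ : {x // x ∈ S}) = e.symm t from
            Subtype.ext rfl]
          exact (e.apply_symm_apply t).symm
      rw [hEU]
      ext ⟨r, c⟩
      constructor
      · intro hp
        rcases hp with hp | hp
        · exact hDn hp
        · obtain ⟨t, ht⟩ := hp
          exact ht ▸ hptDelta t
      · rintro ⟨h1, h2, h3⟩
        rcases le_or_gt (r + c) (n+1) with h | h
        · exact Or.inl ⟨h1, h2, h⟩
        · refine Or.inr ⟨⟨r - 1, by omega⟩, ?_⟩
          show (r - 1 + 1, n + 1 - (r - 1)) = (r, c)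
          rw [Prod.mk.injEq]
          exact ⟨by omega, by omega⟩
    · intro j
      show (B' j ∪ E j).ncard = conj ν j
      have hb'fin : (B' j).Finite := (delta_finite n).subset (hs' j)
      by_cases h : j ∈ S
      · have hEj : E j = {pt (e ⟨j, h⟩)} := by simp only [hE, dif_pos h]
        rw [hEj]
        have hdisj2 : Disjoint (B' j) {pt (e ⟨j, h⟩)} := by
          rw [Set.disjoint_singleton_right]
          intro hmem
          exact hEnotB' j j _ (by rw [hEj]; exact rfl) hmem
        rw [Set.ncard_union_eq hdisj2 hb'fin (Set.finite_singleton _), hn' j,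
          Set.ncard_singleton]
        have h1 : conj μ j < conj ν j := (Finset.mem_filter.1 h).2
        have h2 : conj ν j ≤ conj μ j + 1 := conj_nu_le hmono hsupp j
        omega
      · have hEj : E j = ∅ := by simp only [hE, dif_neg h]
        rw [hEj, Set.union_empty, hn' j]
        have h1 : conj μ j ≤ conj ν j := conj_mu_le hmono hsupp j
        have h2 : conj ν j ≤ conj μ j := by
          rcases lt_or_ge j (ν 0) with hj | hj
          · have : ¬ (conj μ j < conj ν j) := by
              intro hcon
              exact h (Finset.mem_filter.2 ⟨Finset.mem_range.2 hj, hcon⟩)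
            omega
          · have h0 : conj ν j = 0 := conj_eq_zero hmono hsupp j hj
            omega
        omega
    · intro j
      have hbeta' : ∀ p ∈ B' j, 2 ≤ beta (n+1) p ∧ beta (n+1) p = beta n p + 1 := by
        intro p hp
        obtain ⟨h1, h2, h3⟩ := hs' j hp
        simp only [beta]
        omega
      have hbetaE : ∀ t : Fin (n+1), beta (n+1) (pt t) = 1 := by
        intro t
        have := t.2
        simp only [beta, hpt]
        omega
      intro p hp q hq hpq
      rcases hp with hp | hp <;> rcases hq with hq | hq
      · apply hi' j hp hq
        have e1 := (hbeta' p hp).2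
        have e2 := (hbeta' q hq).2
        omega
      · obtain ⟨h, rfl⟩ := hEelim j q hq
        have := (hbeta' p hp).1
        rw [hpq, hbetaE] at this
        omega
      · obtain ⟨h, rfl⟩ := hEelim j p hp
        have := (hbeta' q hq).1
        rw [← hpq, hbetaE] at this
        omega
      · obtain ⟨h1, rfl⟩ := hEelim j p hp
        obtain ⟨h2, hq2⟩ := hEelim j q hq
        rw [hq2]

/-- There is a partition of `Δ_n` into blocks whose sizes are the column lengths
of `ν`, with `β` injective on each block, iff `ν` dominates the staircase `ρ(n)`. -/
theorem blocks_exist_iff_dominates_staircase (n : ℕ) (ν : ℕ → ℕ)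
    (hν : IsPartitionOf (n * (n + 1) / 2) ν) :
    (∃ B : ℕ → Set (ℕ × ℕ),
      (∀ j, B j ⊆ Delta n) ∧
      (∀ j j', j ≠ j' → Disjoint (B j) (B j')) ∧
      (⋃ j, B j) = Delta n ∧
      (∀ j, (B j).ncard = conj ν j) ∧
      (∀ j, Set.InjOn (beta n) (B j))) ↔
    Dominates ν (staircase n) := by
  constructor
  · rintro ⟨B, hsub, hdisj, hcov, hcard, hinj⟩
    exact blocks_dominates n ν hν B hsub hcov hcard hinj
  · intro hdom
    exact exists_blocks n ν hν hdom
end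

section
/- Let τ : Δ_n → {1,...,n} be a map on the triangular grid such that for each i, the preimage τ⁻¹(i) has exactly n+1-i elements, and such that the restriction of τ to each row of Δ_n is a bijection onto {1,...,k} where k is the length of that row, and likewise the restriction of τ to each column of Δ_n is a bijection onto {1,...,k} where k is the length of that column. Then τ(r,c) = n+2-r-c for all (r,c) ∈ Δ_n. -/
lemma gauss_icc (m : ℕ) : (∑ r ∈ Finset.Icc 1 m, r) * 2 = m * (m + 1) := by
  induction m with
  | zero => simp
  | succ k ih =>
    rw [Finset.sum_Icc_succ_top (by omega : 1 ≤ k + 1)]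
    ring_nf
    ring_nf at ih
    omega

lemma tau_key (n : ℕ) (τ : ℕ × ℕ → ℕ)
    (hrow : ∀ r, 1 ≤ r → r ≤ n →
      Set.BijOn (fun c => τ (r, c)) {c | 1 ≤ c ∧ c ≤ n + 1 - r}
        {i | 1 ≤ i ∧ i ≤ n + 1 - r})
    (hcol : ∀ c, 1 ≤ c → c ≤ n →
      Set.BijOn (fun r => τ (r, c)) {r | 1 ≤ r ∧ r ≤ n + 1 - c}
        {i | 1 ≤ i ∧ i ≤ n + 1 - c}) :
    ∀ k i, 1 ≤ i → i ≤ n → n - i < k →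
      ∀ p ∈ Delta n, p.1 + p.2 = n + 2 - i → τ p = i := by
  intro k
  induction k with
  | zero => intro i h1 h2 h3; omega
  | succ K IH =>
    intro i hi1 hi2 hik
    set m := n + 1 - i with hm
    have hm1 : 1 ≤ m := by omega
    -- for each row r ∈ [1,m], pick the unique column with value i
    have hex : ∀ r, ∃ c, (1 ≤ r ∧ r ≤ m) → (1 ≤ c ∧ c ≤ n + 1 - r) ∧ τ (r, c) = i := by
      intro r
      by_cases hr : 1 ≤ r ∧ r ≤ m
      · obtain ⟨c, hc, hc2⟩ := (hrow r hr.1 (by omega)).surjOn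
          (show i ∈ {j | 1 ≤ j ∧ j ≤ n + 1 - r} from ⟨hi1, by omega⟩)
        exact ⟨c, fun _ => ⟨hc, hc2⟩⟩
      · exact ⟨0, fun h => absurd h hr⟩
    choose g hg using hex
    have hg1 : ∀ r, 1 ≤ r → r ≤ m → 1 ≤ g r := fun r h1 h2 => ((hg r ⟨h1, h2⟩).1).1
    have hg2 : ∀ r, 1 ≤ r → r ≤ m → g r ≤ n + 1 - r := fun r h1 h2 => ((hg r ⟨h1, h2⟩).1).2
    have hg3 : ∀ r, 1 ≤ r → r ≤ m → τ (r, g r) = i := fun r h1 h2 => (hg r ⟨h1, h2⟩).2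
    -- column bound: g r ≤ m
    have hgm : ∀ r, 1 ≤ r → r ≤ m → g r ≤ m := by
      intro r h1 h2
      have hc1 := hg1 r h1 h2
      have hc2 := hg2 r h1 h2
      have hcn : g r ≤ n := by omega
      have := (hcol (g r) hc1 hcn).mapsTo
        (show r ∈ {s | 1 ≤ s ∧ s ≤ n + 1 - g r} from ⟨h1, by omega⟩)
      rw [hg3 r h1 h2] at this
      have := this.2
      omega
    -- injectivity of g on [1,m]
    have hginj : ∀ r ∈ Finset.Icc 1 m, ∀ r' ∈ Finset.Icc 1 m, g r = g r' → r = r' := by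
      intro r hr r' hr' heq
      simp only [Finset.mem_Icc] at hr hr'
      have hc1 := hg1 r hr.1 hr.2
      have hc2 := hg2 r hr.1 hr.2
      have hc2' := hg2 r' hr'.1 hr'.2
      have hcn : g r ≤ n := by omega
      refine (hcol (g r) hc1 hcn).injOn
        (show r ∈ {s | 1 ≤ s ∧ s ≤ n + 1 - g r} from ⟨hr.1, by omega⟩)
        (show r' ∈ {s | 1 ≤ s ∧ s ≤ n + 1 - g r} from ⟨hr'.1, by omega⟩) ?_
      show τ (r, g r) = τ (r', g r)
      rw [hg3 r hr.1 hr.2, heq, hg3 r' hr'.1 hr'.2]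
    -- lower bound on diagonals: r + g r ≥ m + 1
    have hlow : ∀ r ∈ Finset.Icc 1 m, m + 1 ≤ r + g r := by
      intro r hr
      simp only [Finset.mem_Icc] at hr
      by_contra hcon
      push_neg at hcon
      have hc1 := hg1 r hr.1 hr.2
      set j := n + 2 - (r + g r) with hj
      have hji : i < j := by omega
      have hjn : j ≤ n := by omega
      have := IH j (by omega) hjn (by omega) (r, g r)
        ⟨hr.1, hc1, by simp; omega⟩ (by simp; omega)
      rw [hg3 r hr.1 hr.2] at this
      omega
    -- the image of g is all of [1,m]
    have himg : (Finset.Icc 1 m).image g = Finset.Icc 1 m := by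
      apply Finset.eq_of_subset_of_card_le
      · intro c hc
        simp only [Finset.mem_image, Finset.mem_Icc] at hc ⊢
        obtain ⟨r, hr, rfl⟩ := hc
        exact ⟨hg1 r hr.1 hr.2, hgm r hr.1 hr.2⟩
      · rw [Finset.card_image_of_injOn (fun a ha b hb h => hginj a ha b hb h)]
    -- sum argument
    have hsumg : ∑ r ∈ Finset.Icc 1 m, g r = ∑ r ∈ Finset.Icc 1 m, r := by
      have h := Finset.sum_image (s := Finset.Icc 1 m) (f := fun x => x) (g := g) hginj
      rw [himg] at h
      exact h.symm
    have hsum : ∑ r ∈ Finset.Icc 1 m, (m + 1) = ∑ r ∈ Finset.Icc 1 m, (r + g r) := by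
      conv_rhs => rw [Finset.sum_add_distrib]
      rw [hsumg, Finset.sum_const, smul_eq_mul, Nat.card_Icc]
      have := gauss_icc m
      simp only [Nat.add_sub_cancel]
      omega
    have hall := (Finset.sum_eq_sum_iff_of_le hlow).mp hsum
    -- conclude
    intro p hp hps
    obtain ⟨r, c⟩ := p
    obtain ⟨hr1, hc1, hrc⟩ := hp
    simp only at hr1 hc1 hrc hps ⊢
    have hrm : r ≤ m := by omega
    have := hall r (Finset.mem_Icc.mpr ⟨hr1, hrm⟩)
    have : g r = c := by omega
    rw [← this]
    exact hg3 r hr1 hrm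

/-- If `τ : Δ_n → {1,...,n}` has fibers of sizes `n+1-i`, restricts to a bijection
of each row of `Δ_n` onto `{1,...,k}` (`k` the row length), and likewise on each
column, then `τ(r,c) = n+2-r-c`. -/
theorem tau_eq_beta (n : ℕ) (τ : ℕ × ℕ → ℕ)
    (hfib : ∀ i, 1 ≤ i → i ≤ n →
      {p : ℕ × ℕ | p ∈ Delta n ∧ τ p = i}.ncard = n + 1 - i)
    (hrow : ∀ r, 1 ≤ r → r ≤ n →
      Set.BijOn (fun c => τ (r, c)) {c | 1 ≤ c ∧ c ≤ n + 1 - r}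
        {i | 1 ≤ i ∧ i ≤ n + 1 - r})
    (hcol : ∀ c, 1 ≤ c → c ≤ n →
      Set.BijOn (fun r => τ (r, c)) {r | 1 ≤ r ∧ r ≤ n + 1 - c}
        {i | 1 ≤ i ∧ i ≤ n + 1 - c}) :
    ∀ p ∈ Delta n, τ p = n + 2 - p.1 - p.2 := by
  intro p hp
  obtain ⟨hr1, hc1, hrc⟩ := hp
  set j := n + 2 - (p.1 + p.2) with hj
  have hrn : p.1 ≤ n := by omega
  have := tau_key n τ hrow hcol (n + 1) j (by omega) (by omega) (by omega) p
    ⟨hr1, hc1, hrc⟩ (by omega)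
  omega
end

section
/- Assuming that g(ρ(n), ρ(n), ν) > 0 for every partition ν of n(n+1)/2 dominated by ρ(n), that Kronecker coefficients satisfy the semigroup property under part-wise addition, and that g((1ⁿ), (1ⁿ), (n)) > 0, it follows by induction on n that g(ρ(n), ρ(n), ν) > 0 for every hook partition ν of n(n+1)/2. -/
/-- The single-column partition `(1ⁿ)`. -/
def column (n : ℕ) : ℕ → ℕ := fun i => if i < n then 1 else 0

/-- The single-row partition `(n)`. -/
def row (n : ℕ) : ℕ → ℕ := fun i => if i = 0 then n else 0

/-- The hook partition `(a, 1^b)`. -/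
def hook (a b : ℕ) : ℕ → ℕ := fun i => if i = 0 then a else if i ≤ b then 1 else 0

/-- `ν` is a hook partition. -/
def IsHook (ν : ℕ → ℕ) : Prop := ∃ a b, 1 ≤ a ∧ ν = hook a b

lemma hook_sum' (a b : ℕ) : ∀ N, ∑ i ∈ Finset.range N, hook a b i
    = if N = 0 then 0 else a + min b (N - 1) := by
  intro N
  induction N with
  | zero => simp
  | succ N ih =>
    rw [Finset.sum_range_succ, ih]
    unfold hook
    rcases Nat.eq_zero_or_pos N with h|h
    · subst h; simp
    · rw [if_neg (by omega : ¬ N = 0), if_neg (by omega : ¬ N = 0),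
        if_neg (by omega : ¬ N + 1 = 0)]
      split_ifs <;> omega

lemma hook_sum (a b N : ℕ) (h : b < N) : ∑ i ∈ Finset.range N, hook a b i = a + b := by
  rw [hook_sum']
  split_ifs <;> omega

lemma staircase_sum_self (n : ℕ) : 2 * ∑ i ∈ Finset.range n, staircase n i = n * (n + 1) := by
  induction n with
  | zero => simp
  | succ n ih =>
    have h1 : ∑ i ∈ Finset.range (n+1), staircase (n+1) i
        = (∑ i ∈ Finset.range n, staircase n i) + (n + 1) := by
      rw [Finset.sum_range_succ]
      have h2 : ∑ i ∈ Finset.range n, staircase (n+1) i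
          = ∑ i ∈ Finset.range n, (staircase n i + 1) := by
        apply Finset.sum_congr rfl
        intro i hi
        have := Finset.mem_range.mp hi
        unfold staircase
        omega
      rw [h2, Finset.sum_add_distrib]
      simp [staircase]
      omega
    rw [h1]
    ring_nf
    ring_nf at ih
    omega

lemma staircase_sum (n k : ℕ) (h : n ≤ k) :
    ∑ i ∈ Finset.range k, staircase n i = n * (n + 1) / 2 := by
  have h1 : ∑ i ∈ Finset.range k, staircase n i = ∑ i ∈ Finset.range n, staircase n i := by
    symm
    apply Finset.sum_subset (Finset.range_subset_range.mpr h)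
    intro x _ hx
    have := Finset.mem_range.not.mp hx
    unfold staircase
    omega
  have := staircase_sum_self n
  omega

lemma dom_aux (n a b : ℕ) (han : a ≤ n) :
    ∀ k, k ≤ n → ∑ i ∈ Finset.range k, hook a b i ≤ ∑ i ∈ Finset.range k, staircase n i := by
  intro k
  induction k with
  | zero => simp
  | succ k ih =>
    intro hk
    rw [Finset.sum_range_succ, Finset.sum_range_succ]
    have h1 := ih (by omega)
    have h2 : hook a b k ≤ staircase n k := by
      unfold hook staircase
      split_ifs <;> omega
    omega

lemma hook_dominated (n a b : ℕ) (han : a ≤ n)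
    (hab : a + b = n * (n + 1) / 2) : Dominates (staircase n) (hook a b) := by
  intro k
  rcases le_or_gt k n with h | h
  · exact dom_aux n a b han k h
  · have h1 : ∑ i ∈ Finset.range k, hook a b i ≤ a + b := by
      rcases le_or_gt k (b + 1) with h2 | h2
      · calc ∑ i ∈ Finset.range k, hook a b i
            ≤ ∑ i ∈ Finset.range (b + 1), hook a b i :=
              Finset.sum_le_sum_of_subset (Finset.range_subset_range.mpr h2)
          _ = a + b := hook_sum a b (b + 1) (by omega)
      · rw [hook_sum a b k (by omega)]
    rw [staircase_sum n k (by omega)]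
    omega

lemma hook_partition_sum (d a b : ℕ) (ha : 1 ≤ a) (hp : IsPartitionOf d (hook a b)) :
    a + b = d := by
  obtain ⟨-, N, hz, hs⟩ := hp
  have hbN : b < N := by
    by_contra h
    have := hz b (by omega)
    unfold hook at this
    split_ifs at this <;> omega
  rw [hook_sum a b N hbN] at hs
  exact hs

lemma hook_isPartitionOf (a b : ℕ) (ha : 1 ≤ a) : IsPartitionOf (a + b) (hook a b) := by
  constructor
  · intro i j hij
    unfold hook
    split_ifs <;> omega
  · exact ⟨b + 1, fun i hi => by unfold hook; split_ifs <;> omega,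
      hook_sum a b (b + 1) (by omega)⟩

/-- Saxl conjecture for hooks.  Assume `g` (the Kronecker coefficient) is positive
on `(ρ(n), ρ(n), ν)` whenever `ν` is a partition of `n(n+1)/2` dominated by
`ρ(n)`, that `g` satisfies the semigroup property under part-wise addition, and
that `g((1ⁿ), (1ⁿ), (n)) > 0`.  Then `g(ρ(n), ρ(n), ν) > 0` for every hook
partition `ν` of `n(n+1)/2`. -/
theorem saxl_for_hooks
    (g : (ℕ → ℕ) → (ℕ → ℕ) → (ℕ → ℕ) → ℕ)
    (hdom : ∀ n ν, IsPartitionOf (n * (n + 1) / 2) ν →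
      Dominates (staircase n) ν → 0 < g (staircase n) (staircase n) ν)
    (hsemi : ∀ l m ν l' m' ν', 0 < g l m ν → 0 < g l' m' ν' →
      0 < g (fun i => l i + l' i) (fun i => m i + m' i) (fun i => ν i + ν' i))
    (hcol : ∀ n, 0 < g (column n) (column n) (row n)) :
    ∀ n ν, IsPartitionOf (n * (n + 1) / 2) ν → IsHook ν →
      0 < g (staircase n) (staircase n) ν := by
  intro n
  induction n with
  | zero =>
    intro ν hp hh
    obtain ⟨a, b, ha, rfl⟩ := hh
    have := hook_partition_sum _ a b ha hp
    omega
  | succ m ih =>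
    intro ν hp hh
    obtain ⟨a, b, ha, rfl⟩ := hh
    have hab := hook_partition_sum _ a b ha hp
    by_cases hle : a ≤ m + 1
    · exact hdom (m + 1) _ hp (hook_dominated (m + 1) a b hle hab)
    · -- a ≥ m + 2
      have hq : (m + 1) * (m + 1 + 1) = m * (m + 1) + 2 * (m + 1) := by ring
      have hab' : (a - (m + 1)) + b = m * (m + 1) / 2 := by omega
      have h1 : IsPartitionOf (m * (m + 1) / 2) (hook (a - (m + 1)) b) := by
        rw [← hab']
        exact hook_isPartitionOf _ _ (by omega)
      have h2 := ih _ h1 ⟨a - (m + 1), b, by omega, rfl⟩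
      have h3 := hcol (m + 1)
      have h4 := hsemi _ _ _ _ _ _ h2 h3
      have e1 : (fun i => staircase m i + column (m + 1) i) = staircase (m + 1) := by
        funext i
        unfold staircase column
        split_ifs <;> omega
      have e2 : (fun i => hook (a - (m + 1)) b i + row (m + 1) i) = hook a b := by
        funext i
        unfold hook row
        split_ifs <;> omega
      rwa [e1, e2] at h4
end
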